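/- If f : [0,T]^2 → ℝ is continuous and of finite controlled p-variation, then there exists a 2D control ω such that |f(R)|^p ≤ ω(R) for all rectangles R ⊆ [0,T]^2. -/

import Mathlib

open Set
open scoped ENNReal NNReal

/-- A closed rectangle `[a,b] × [c,d] ⊆ ℝ²`, encoded by its four corner coordinates. -/
structure Rect where
  a : ℝ
  b : ℝ
  c : ℝ
  d : ℝ

noncomputable instance : DecidableEq Rect := fun _ _ => Classical.dec _

/-- The closed rectangle as a subset of the plane. -/
def Rect.toSet (R : Rect) : Set (ℝ × ℝ) := Set.Icc R.a R.b ×ˢ Set.Icc R.c R.d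

/-- The open interior of the rectangle. -/
def Rect.openSet (R : Rect) : Set (ℝ × ℝ) := Set.Ioo R.a R.b ×ˢ Set.Ioo R.c R.d

/-- The rectangle is well formed: `a ≤ b`, `c ≤ d`. -/
def Rect.Valid (R : Rect) : Prop := R.a ≤ R.b ∧ R.c ≤ R.d

/-- Rectangular increment of `f` over `[a,b] × [c,d]`. -/
def Rect.inc (f : ℝ × ℝ → ℝ) (R : Rect) : ℝ :=
  f (R.b, R.d) - f (R.a, R.d) - f (R.b, R.c) + f (R.a, R.c)

/-- `P` is a partition of `R` into essentially disjoint rectangles. -/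
def IsPartition (R : Rect) (P : Finset Rect) : Prop :=
  (∀ Q ∈ P, Q.Valid) ∧
  ((P : Set Rect).Pairwise fun Q Q' => Disjoint Q.openSet Q'.openSet) ∧
  (⋃ Q ∈ P, Q.toSet) = R.toSet

/-- The controlled `p`-variation of `f` over `R`, raised to the power `p`:
`sup` over all partitions of `R` into essentially disjoint rectangles of
`Σ |f(A)|^p`.  So `|f|_{p-var;R} = (cVarSum p f R) ^ (1/p)`. -/
noncomputable def cVarSum (p : ℝ) (f : ℝ × ℝ → ℝ) (R : Rect) : ℝ≥0∞ :=
  ⨆ (P : Finset Rect) (_ : IsPartition R P),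
    ∑ Q ∈ P, ENNReal.ofReal |Rect.inc f Q| ^ p

/-- The grid `p`-variation of `f` over `R`, raised to the power `p`:
`sup` over grid-like partitions (products of dissections of the two sides)
of `Σ_{i,j} |f([t_i,t_{i+1}] × [s_j,s_{j+1}])|^p`.
So `V_p(f;R) = (gridVarSum p f R) ^ (1/p)`. -/
noncomputable def gridVarSum (p : ℝ) (f : ℝ × ℝ → ℝ) (R : Rect) : ℝ≥0∞ :=
  ⨆ (n : ℕ) (m : ℕ) (t : Fin (n+1) → ℝ) (s : Fin (m+1) → ℝ)
    (_ : Monotone t) (_ : Monotone s)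
    (_ : t 0 = R.a) (_ : t (Fin.last n) = R.b)
    (_ : s 0 = R.c) (_ : s (Fin.last m) = R.d),
    ∑ i : Fin n, ∑ j : Fin m,
      ENNReal.ofReal |Rect.inc f ⟨t i.castSucc, t i.succ, s j.castSucc, s j.succ⟩| ^ p

/-- The set `Δ_T × Δ_T` of (coordinates of) rectangles contained in `[0,T]²`. -/
def DeltaSq (T : ℝ) : Set (ℝ × ℝ × ℝ × ℝ) :=
  {x | 0 ≤ x.1 ∧ x.1 ≤ x.2.1 ∧ x.2.1 ≤ T ∧
       0 ≤ x.2.2.1 ∧ x.2.2.1 ≤ x.2.2.2 ∧ x.2.2.2 ≤ T}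

/-- `ω` is a 2D control on `[0,T]²`: finite `[0,∞)`-valued, continuous as a function of
the four corner coordinates on `Δ_T × Δ_T`, zero on degenerate rectangles, and
super-additive over finite partitions into essentially disjoint rectangles. -/
def Is2DControl (T : ℝ) (ω : Rect → ℝ≥0∞) : Prop :=
  (∀ R : Rect, R.toSet ⊆ (Rect.mk 0 T 0 T).toSet → ω R ≠ ⊤) ∧
  ContinuousOn (fun x : ℝ × ℝ × ℝ × ℝ => ω ⟨x.1, x.2.1, x.2.2.1, x.2.2.2⟩) (DeltaSq T) ∧
  (∀ R : Rect, R.Valid → (R.a = R.b ∨ R.c = R.d) → ω R = 0) ∧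
  (∀ R : Rect, R.Valid → R.toSet ⊆ (Rect.mk 0 T 0 T).toSet →
    ∀ P : Finset Rect, IsPartition R P → ∑ Q ∈ P, ω Q ≤ ω R)

section Aux

attribute [local instance] Classical.propDecidable

open Topology Filter

/-- essentially disjoint family of valid subrectangles of `R` -/
def IsFam (R : Rect) (F : Finset Rect) : Prop :=
  (∀ Q ∈ F, Q.Valid ∧ Q.toSet ⊆ R.toSet) ∧
  ((F : Set Rect).Pairwise fun Q Q' => Disjoint Q.openSet Q'.openSet)

lemma isFam_empty (R : Rect) : IsFam R ∅ := by
  constructor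
  · intro Q hQ; simp at hQ
  · simp [Set.Pairwise]

instance famNonempty (R : Rect) : Nonempty {F : Finset Rect // IsFam R F} :=
  ⟨⟨∅, isFam_empty R⟩⟩

noncomputable def famSum (p : ℝ) (f : ℝ × ℝ → ℝ) (F : Finset Rect) : ℝ≥0∞ :=
  ∑ Q ∈ F, ENNReal.ofReal |Rect.inc f Q| ^ p

noncomputable def W (p : ℝ) (f : ℝ × ℝ → ℝ) (R : Rect) : ℝ≥0∞ :=
  ⨆ F : {F : Finset Rect // IsFam R F}, famSum p f F.1

lemma famSum_le_W {p : ℝ} {f : ℝ × ℝ → ℝ} {R : Rect} {F : Finset Rect}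
    (h : IsFam R F) : famSum p f F ≤ W p f R :=
  le_iSup (fun F : {F : Finset Rect // IsFam R F} => famSum p f F.1) ⟨F, h⟩

lemma W_le {p : ℝ} {f : ℝ × ℝ → ℝ} {R : Rect} {x : ℝ≥0∞}
    (h : ∀ F : Finset Rect, IsFam R F → famSum p f F ≤ x) : W p f R ≤ x :=
  iSup_le fun F => h F.1 F.2

lemma W_mono {p : ℝ} {f : ℝ × ℝ → ℝ} {R R' : Rect}
    (h : R.toSet ⊆ R'.toSet) : W p f R ≤ W p f R' := by
  refine W_le fun F hF => famSum_le_W ⟨fun Q hQ => ⟨(hF.1 Q hQ).1, ((hF.1 Q hQ).2).trans h⟩, hF.2⟩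

lemma Rect.corner_ac {Q : Rect} (h : Q.Valid) : ((Q.a, Q.c) : ℝ × ℝ) ∈ Q.toSet := by
  simp [Rect.toSet, Set.mem_prod, h.1, h.2, le_refl]

lemma Rect.corner_bd {Q : Rect} (h : Q.Valid) : ((Q.b, Q.d) : ℝ × ℝ) ∈ Q.toSet := by
  simp [Rect.toSet, Set.mem_prod, h.1, h.2, le_refl]

lemma coords_le {G Q : Rect} (hG : G.Valid) (h : G.toSet ⊆ Q.toSet) :
    Q.a ≤ G.a ∧ G.b ≤ Q.b ∧ Q.c ≤ G.c ∧ G.d ≤ Q.d := by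
  have h1 := h (Rect.corner_ac hG)
  have h2 := h (Rect.corner_bd hG)
  simp only [Rect.toSet, Set.mem_prod, Set.mem_Icc] at h1 h2
  exact ⟨h1.1.1, h2.1.2, h1.2.1, h2.2.2⟩

lemma toSet_mono {G Q : Rect} (h1 : Q.a ≤ G.a) (h2 : G.b ≤ Q.b) (h3 : Q.c ≤ G.c)
    (h4 : G.d ≤ Q.d) : G.toSet ⊆ Q.toSet :=
  Set.prod_mono (Set.Icc_subset_Icc h1 h2) (Set.Icc_subset_Icc h3 h4)

lemma openSet_mono {G Q : Rect} (h1 : Q.a ≤ G.a) (h2 : G.b ≤ Q.b) (h3 : Q.c ≤ G.c)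
    (h4 : G.d ≤ Q.d) : G.openSet ⊆ Q.openSet :=
  Set.prod_mono (Set.Ioo_subset_Ioo h1 h2) (Set.Ioo_subset_Ioo h3 h4)

lemma openSet_sub {G Q : Rect} (hG : G.Valid) (h : G.toSet ⊆ Q.toSet) :
    G.openSet ⊆ Q.openSet := by
  obtain ⟨h1, h2, h3, h4⟩ := coords_le hG h
  exact openSet_mono h1 h2 h3 h4

lemma openSet_nonempty {Q : Rect} (h1 : Q.a < Q.b) (h2 : Q.c < Q.d) :
    Q.openSet.Nonempty := by
  refine ⟨((Q.a + Q.b) / 2, (Q.c + Q.d) / 2), ?_⟩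
  simp [Rect.openSet, Set.mem_prod]
  constructor <;> constructor <;> linarith

lemma inc_thin {f : ℝ × ℝ → ℝ} {Q : Rect} (h : Q.a = Q.b ∨ Q.c = Q.d) :
    Rect.inc f Q = 0 := by
  rcases h with h | h <;> · simp only [Rect.inc, h]; ring

lemma term_thin {p : ℝ} (hp : 1 ≤ p) {f : ℝ × ℝ → ℝ} {Q : Rect}
    (h : Q.a = Q.b ∨ Q.c = Q.d) : ENNReal.ofReal |Rect.inc f Q| ^ p = 0 := by
  rw [inc_thin h]
  simp [ENNReal.zero_rpow_of_pos (lt_of_lt_of_le zero_lt_one hp)]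

lemma term_not_nondeg {p : ℝ} (hp : 1 ≤ p) {f : ℝ × ℝ → ℝ} {Q : Rect} (hv : Q.Valid)
    (h : ¬(Q.a < Q.b ∧ Q.c < Q.d)) : ENNReal.ofReal |Rect.inc f Q| ^ p = 0 := by
  apply term_thin hp
  rcases not_and_or.1 h with h | h
  · exact Or.inl (le_antisymm hv.1 (not_lt.1 h))
  · exact Or.inr (le_antisymm hv.2 (not_lt.1 h))


-- filtered family sum
lemma famSum_filter_nondeg {p : ℝ} (hp : 1 ≤ p) (f : ℝ × ℝ → ℝ) {F : Finset Rect}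
    (hv : ∀ Q ∈ F, Q.Valid) :
    famSum p f (F.filter fun Q => Q.a < Q.b ∧ Q.c < Q.d) = famSum p f F := by
  refine Finset.sum_filter_of_ne fun Q hQ hne => ?_
  by_contra h
  exact hne (term_not_nondeg hp (hv Q hQ) h)

lemma isFam_filter {R : Rect} {F : Finset Rect} (h : IsFam R F) (P : Rect → Prop) :
    IsFam R (F.filter P) := by
  refine ⟨fun Q hQ => h.1 Q (Finset.mem_filter.1 hQ).1, ?_⟩
  exact Set.Pairwise.mono (by intro x hx; exact (Finset.mem_filter.1 hx).1) h.2

/-- two-rectangle superadditivity -/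
lemma W_add_W_le {p : ℝ} (hp : 1 ≤ p) (f : ℝ × ℝ → ℝ) {A B R : Rect}
    (hAR : A.toSet ⊆ R.toSet) (hBR : B.toSet ⊆ R.toSet)
    (hdisj : Disjoint A.openSet B.openSet) :
    W p f A + W p f B ≤ W p f R := by
  refine ENNReal.iSup_add_iSup_le ?_
  rintro ⟨FA, hFA⟩ ⟨FB, hFB⟩
  dsimp only
  set nd : Rect → Prop := fun Q => Q.a < Q.b ∧ Q.c < Q.d with hnd
  have hopA : ∀ Q ∈ FA.filter nd, Q.openSet ⊆ A.openSet := by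
    intro Q hQ
    rcases Finset.mem_filter.1 hQ with ⟨hQF, _⟩
    exact openSet_sub (hFA.1 Q hQF).1 (hFA.1 Q hQF).2
  have hopB : ∀ Q ∈ FB.filter nd, Q.openSet ⊆ B.openSet := by
    intro Q hQ
    rcases Finset.mem_filter.1 hQ with ⟨hQF, _⟩
    exact openSet_sub (hFB.1 Q hQF).1 (hFB.1 Q hQF).2
  have hdisjF : Disjoint (FA.filter nd) (FB.filter nd) := by
    rw [Finset.disjoint_left]
    intro Q hQA hQB
    have hne := openSet_nonempty (Finset.mem_filter.1 hQA).2.1 (Finset.mem_filter.1 hQA).2.2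
    have : Q.openSet ⊆ A.openSet ∩ B.openSet :=
      Set.subset_inter (hopA Q hQA) (hopB Q hQB)
    rw [Set.disjoint_iff_inter_eq_empty.1 hdisj] at this
    exact hne.ne_empty (Set.subset_empty_iff.1 this)
  have hunion : IsFam R (FA.filter nd ∪ FB.filter nd) := by
    constructor
    · intro Q hQ
      rcases Finset.mem_union.1 hQ with hQ | hQ
      · rcases Finset.mem_filter.1 hQ with ⟨hQF, _⟩
        exact ⟨(hFA.1 Q hQF).1, (hFA.1 Q hQF).2.trans hAR⟩
      · rcases Finset.mem_filter.1 hQ with ⟨hQF, _⟩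
        exact ⟨(hFB.1 Q hQF).1, (hFB.1 Q hQF).2.trans hBR⟩
    · intro Q hQ Q' hQ' hne
      rcases Finset.mem_coe.1 hQ with hQ; rcases Finset.mem_coe.1 hQ' with hQ'
      rcases Finset.mem_union.1 hQ with h1 | h1 <;> rcases Finset.mem_union.1 hQ' with h2 | h2
      · exact hFA.2 (Finset.mem_coe.2 (Finset.filter_subset nd FA h1)) (Finset.mem_coe.2 (Finset.filter_subset nd FA h2)) hne
      · exact Set.disjoint_of_subset (hopA Q h1) (hopB Q' h2) hdisj
      · exact Set.disjoint_of_subset (hopB Q h1) (hopA Q' h2) hdisj.symm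
      · exact hFB.2 (Finset.mem_coe.2 (Finset.filter_subset nd FB h1)) (Finset.mem_coe.2 (Finset.filter_subset nd FB h2)) hne
  calc famSum p f FA + famSum p f FB
      = famSum p f (FA.filter nd) + famSum p f (FB.filter nd) := by
        rw [famSum_filter_nondeg hp f (fun Q hQ => (hFA.1 Q hQ).1),
          famSum_filter_nondeg hp f (fun Q hQ => (hFB.1 Q hQ).1)]
    _ = famSum p f (FA.filter nd ∪ FB.filter nd) := (Finset.sum_union hdisjF).symm
    _ ≤ W p f R := famSum_le_W hunion

/-- Finset superadditivity -/
lemma sum_W_le {p : ℝ} (hp : 1 ≤ p) (f : ℝ × ℝ → ℝ) {R : Rect} {S : Finset Rect}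
    (hv : ∀ Q ∈ S, Q.Valid) (hsub : ∀ Q ∈ S, Q.toSet ⊆ R.toSet)
    (hdisj : (S : Set Rect).Pairwise fun Q Q' => Disjoint Q.openSet Q'.openSet) :
    ∑ Q ∈ S, W p f Q ≤ W p f R := by
  classical
  rcases Finset.eq_empty_or_nonempty S with rfl | hSne
  · simp
  rcases eq_or_ne (W p f R) ⊤ with htop | htop
  · simp [htop]
  refine ENNReal.le_of_forall_pos_le_add fun ε hε _ => ?_
  set n : ℕ := S.card with hn
  have hn0 : (n : ℝ≥0∞) ≠ 0 := by
    simpa [hn] using Finset.card_ne_zero_of_mem hSne.choose_spec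
  set δ : ℝ≥0∞ := (ε : ℝ≥0∞) / n with hδ
  have hchoice : ∀ Q : Rect, ∃ F : Finset Rect, IsFam Q F ∧
      (Q ∈ S → W p f Q ≤ famSum p f F + δ) := by
    intro Q
    by_cases hQS : Q ∈ S
    swap
    · exact ⟨∅, isFam_empty Q, fun h => absurd h hQS⟩
    rcases eq_or_ne (W p f Q) 0 with h0 | h0
    · exact ⟨∅, isFam_empty Q, fun _ => by simp [h0]⟩
    · have hQtop : W p f Q ≠ ⊤ := ne_top_of_le_ne_top htop (W_mono (hsub Q hQS))
      have hδ0 : δ ≠ 0 := by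
        simp [hδ, ENNReal.div_eq_zero_iff, ENNReal.coe_eq_zero, hε.ne', ENNReal.natCast_ne_top]
      have hlt : W p f Q - δ < W p f Q := ENNReal.sub_lt_self hQtop h0 hδ0
      rw [W, lt_iSup_iff] at hlt
      obtain ⟨⟨F, hF⟩, hFlt⟩ := hlt
      refine ⟨F, hF, fun _ => ?_⟩
      rcases le_total (W p f Q) δ with h | h
      · exact h.trans (by simp)
      · rw [← tsub_add_cancel_of_le h]
        exact add_le_add hFlt.le le_rfl
  choose Fam hFam1 hFam2 using hchoice
  set nd : Rect → Prop := fun Q => Q.a < Q.b ∧ Q.c < Q.d with hnd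
  set C : Finset Rect := S.biUnion (fun Q => (Fam Q).filter nd) with hC
  have hopen : ∀ Q, ∀ G ∈ (Fam Q).filter nd, G.openSet ⊆ Q.openSet := by
    intro Q G hG
    rcases Finset.mem_filter.1 hG with ⟨hGF, _⟩
    exact openSet_sub ((hFam1 Q).1 G hGF).1 ((hFam1 Q).1 G hGF).2
  have hdisjF : ∀ Q ∈ S, ∀ Q' ∈ S, Q ≠ Q' →
      Disjoint ((Fam Q).filter nd) ((Fam Q').filter nd) := by
    intro Q hQ Q' hQ' hne
    rw [Finset.disjoint_left]
    intro G hGA hGB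
    have hne' := openSet_nonempty (Finset.mem_filter.1 hGA).2.1 (Finset.mem_filter.1 hGA).2.2
    have hGsub : G.openSet ⊆ Q.openSet ∩ Q'.openSet :=
      Set.subset_inter (hopen Q G hGA) (hopen Q' G hGB)
    rw [Set.disjoint_iff_inter_eq_empty.1
      (hdisj (Finset.mem_coe.2 hQ) (Finset.mem_coe.2 hQ') hne)] at hGsub
    exact hne'.ne_empty (Set.subset_empty_iff.1 hGsub)
  have hCfam : IsFam R C := by
    constructor
    · intro G hG
      obtain ⟨Q, hQS, hGQ⟩ := Finset.mem_biUnion.1 hG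
      rcases Finset.mem_filter.1 hGQ with ⟨hGF, _⟩
      exact ⟨((hFam1 Q).1 G hGF).1, (((hFam1 Q).1 G hGF).2).trans (hsub Q hQS)⟩
    · intro G hG G' hG' hne
      obtain ⟨Q, hQS, hGQ⟩ := Finset.mem_biUnion.1 (Finset.mem_coe.1 hG)
      obtain ⟨Q', hQS', hGQ'⟩ := Finset.mem_biUnion.1 (Finset.mem_coe.1 hG')
      rcases eq_or_ne Q Q' with rfl | hQne
      · exact (hFam1 Q).2 (Finset.mem_coe.2 (Finset.filter_subset nd (Fam Q) hGQ)) (Finset.mem_coe.2 (Finset.filter_subset nd (Fam Q) hGQ')) hne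
      · exact Set.disjoint_of_subset (hopen Q G hGQ) (hopen Q' G' hGQ')
          (hdisj (Finset.mem_coe.2 hQS) (Finset.mem_coe.2 hQS') hQne)
  have hPD : (↑S : Set Rect).PairwiseDisjoint (fun Q => (Fam Q).filter nd) := by
    intro Q hQ Q' hQ' hne
    exact hdisjF Q (Finset.mem_coe.1 hQ) Q' (Finset.mem_coe.1 hQ') hne
  have hsum : ∑ Q ∈ S, famSum p f ((Fam Q).filter nd) = famSum p f C := by
    rw [hC, famSum, Finset.sum_biUnion hPD]
    rfl
  calc ∑ Q ∈ S, W p f Q ≤ ∑ Q ∈ S, (famSum p f (Fam Q) + δ) :=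
        Finset.sum_le_sum fun Q hQ => hFam2 Q hQ
    _ = ∑ Q ∈ S, famSum p f ((Fam Q).filter nd) + S.card • δ := by
        rw [Finset.sum_add_distrib, Finset.sum_const]
        congr 1
        exact Finset.sum_congr rfl fun Q hQ =>
          (famSum_filter_nondeg hp f (fun G hG => ((hFam1 Q).1 G hG).1)).symm
    _ ≤ famSum p f C + ε := by
        rw [hsum]
        refine add_le_add le_rfl ?_
        rw [nsmul_eq_mul, hδ]
        exact ENNReal.mul_div_le
    _ ≤ W p f R + ε := add_le_add (famSum_le_W hCfam) le_rfl


lemma W_thin {p : ℝ} (hp : 1 ≤ p) (f : ℝ × ℝ → ℝ) {R : Rect} (hR : R.Valid)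
    (h : R.a = R.b ∨ R.c = R.d) : W p f R = 0 := by
  refine le_antisymm (W_le fun F hF => ?_) (zero_le)
  have : ∀ Q ∈ F, ENNReal.ofReal |Rect.inc f Q| ^ p = 0 := by
    intro Q hQ
    obtain ⟨hQv, hQsub⟩ := hF.1 Q hQ
    obtain ⟨h1, h2, h3, h4⟩ := coords_le hQv hQsub
    refine term_thin hp ?_
    rcases h with h | h
    · exact Or.inl (le_antisymm hQv.1 (by linarith))
    · exact Or.inr (le_antisymm hQv.2 (by linarith))
  simp [famSum, Finset.sum_eq_zero this]

lemma single_le_W {p : ℝ} (f : ℝ × ℝ → ℝ) {R : Rect} (hR : R.Valid) :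
    ENNReal.ofReal |Rect.inc f R| ^ p ≤ W p f R := by
  have : IsFam R {R} := by
    refine ⟨fun Q hQ => ?_, ?_⟩
    · rcases Finset.mem_singleton.1 hQ with rfl; exact ⟨hR, subset_rfl⟩
    · simp [Set.pairwise_singleton]
  simpa [famSum] using famSum_le_W this

lemma inc_split_x (f : ℝ × ℝ → ℝ) (Q : Rect) (t : ℝ) :
    Rect.inc f Q = Rect.inc f ⟨Q.a, t, Q.c, Q.d⟩ + Rect.inc f ⟨t, Q.b, Q.c, Q.d⟩ := by
  simp only [Rect.inc]; ring

/-- push a per-rectangle transformation into a family of `R₁` -/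
lemma sum_push_le {p : ℝ} (hp : 1 ≤ p) (f : ℝ × ℝ → ℝ) {R R₁ : Rect} {F : Finset Rect}
    (hF : IsFam R F) (g : Rect → Rect)
    (hop : ∀ Q ∈ F, (g Q).openSet ⊆ Q.openSet)
    (hval : ∀ Q ∈ F, (g Q).Valid)
    (hin : ∀ Q ∈ F, (g Q).a < (g Q).b → (g Q).c < (g Q).d → (g Q).toSet ⊆ R₁.toSet) :
    ∑ Q ∈ F, ENNReal.ofReal |Rect.inc f (g Q)| ^ p ≤ W p f R₁ := by
  classical
  set P : Rect → Prop := fun Q => (g Q).a < (g Q).b ∧ (g Q).c < (g Q).d with hP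
  have hsum0 : ∑ Q ∈ F.filter P, ENNReal.ofReal |Rect.inc f (g Q)| ^ p
      = ∑ Q ∈ F, ENNReal.ofReal |Rect.inc f (g Q)| ^ p := by
    refine Finset.sum_filter_of_ne fun Q hQ hne => ?_
    by_contra h
    exact hne (term_not_nondeg hp (hval Q hQ) h)
  have hinj : ∀ Q ∈ F.filter P, ∀ Q' ∈ F.filter P, g Q = g Q' → Q = Q' := by
    intro Q hQ Q' hQ' hgeq
    by_contra hne
    obtain ⟨hQF, hPQ⟩ := Finset.mem_filter.1 hQ
    obtain ⟨hQF', _⟩ := Finset.mem_filter.1 hQ'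
    have hd := hF.2 (Finset.mem_coe.2 hQF) (Finset.mem_coe.2 hQF') hne
    have hne' := openSet_nonempty hPQ.1 hPQ.2
    have hsub2 : (g Q).openSet ⊆ Q.openSet ∩ Q'.openSet := by
      refine Set.subset_inter (hop Q hQF) ?_
      rw [hgeq]; exact hop Q' hQF'
    rw [Set.disjoint_iff_inter_eq_empty.1 hd] at hsub2
    exact hne'.ne_empty (Set.subset_empty_iff.1 hsub2)
  have hfam : IsFam R₁ ((F.filter P).image g) := by
    constructor
    · intro G hG
      obtain ⟨Q, hQ, rfl⟩ := Finset.mem_image.1 hG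
      obtain ⟨hQF, hPQ⟩ := Finset.mem_filter.1 hQ
      exact ⟨hval Q hQF, hin Q hQF hPQ.1 hPQ.2⟩
    · intro G hG G' hG' hne
      obtain ⟨Q, hQ, rfl⟩ := Finset.mem_image.1 (Finset.mem_coe.1 hG)
      obtain ⟨Q', hQ', rfl⟩ := Finset.mem_image.1 (Finset.mem_coe.1 hG')
      have hQne : Q ≠ Q' := fun h => hne (by rw [h])
      exact Set.disjoint_of_subset (hop Q (Finset.mem_filter.1 hQ).1)
        (hop Q' (Finset.mem_filter.1 hQ').1)
        (hF.2 (Finset.mem_coe.2 (Finset.mem_filter.1 hQ).1)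
          (Finset.mem_coe.2 (Finset.mem_filter.1 hQ').1) hQne)
  calc ∑ Q ∈ F, ENNReal.ofReal |Rect.inc f (g Q)| ^ p
      = ∑ Q ∈ F.filter P, ENNReal.ofReal |Rect.inc f (g Q)| ^ p := hsum0.symm
    _ = ∑ G ∈ (F.filter P).image g, ENNReal.ofReal |Rect.inc f G| ^ p := by
        rw [Finset.sum_image hinj]
    _ ≤ W p f R₁ := famSum_le_W hfam

/-- quasi-subadditivity under a vertical split -/
lemma W_split_x {p : ℝ} (hp : 1 ≤ p) (f : ℝ × ℝ → ℝ) {R : Rect} {t : ℝ}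
    (h1 : R.a ≤ t) (h2 : t ≤ R.b) :
    W p f R ≤ (W p f ⟨R.a, t, R.c, R.d⟩ ^ (1/p) + W p f ⟨t, R.b, R.c, R.d⟩ ^ (1/p)) ^ p := by
  have hp0 : (0:ℝ) < p := lt_of_lt_of_le zero_lt_one hp
  refine W_le fun F hF => ?_
  set u : Rect → ℝ := fun Q => Q.a ⊔ (t ⊓ Q.b) with hu
  set gl : Rect → Rect := fun Q => ⟨Q.a, u Q, Q.c, Q.d⟩ with hgl
  set gr : Rect → Rect := fun Q => ⟨u Q, Q.b, Q.c, Q.d⟩ with hgr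
  have huQ : ∀ Q : Rect, Q.Valid → Q.a ≤ u Q ∧ u Q ≤ Q.b := by
    intro Q hv
    exact ⟨le_sup_left, sup_le hv.1 inf_le_right⟩
  have hSl : ∑ Q ∈ F, ENNReal.ofReal |Rect.inc f (gl Q)| ^ p ≤ W p f ⟨R.a, t, R.c, R.d⟩ := by
    refine sum_push_le hp f hF gl ?_ ?_ ?_
    · intro Q hQ
      exact openSet_mono le_rfl (huQ Q (hF.1 Q hQ).1).2 le_rfl le_rfl
    · intro Q hQ
      exact ⟨(huQ Q (hF.1 Q hQ).1).1, (hF.1 Q hQ).1.2⟩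
    · intro Q hQ hab _
      obtain ⟨hc1, hc2, hc3, hc4⟩ := coords_le (hF.1 Q hQ).1 (hF.1 Q hQ).2
      simp only [hgl] at hab ⊢
      have hut : u Q ≤ t := by
        have h' : Q.a < t ⊓ Q.b := by
          by_contra hcon
          push_neg at hcon
          have heq : u Q = Q.a := sup_eq_left.2 hcon
          rw [heq] at hab
          exact lt_irrefl _ hab
        simp only [hu]
        exact sup_le (h'.le.trans inf_le_left) inf_le_left
      exact toSet_mono hc1 hut hc3 hc4
  have hSr : ∑ Q ∈ F, ENNReal.ofReal |Rect.inc f (gr Q)| ^ p ≤ W p f ⟨t, R.b, R.c, R.d⟩ := by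
    refine sum_push_le hp f hF gr ?_ ?_ ?_
    · intro Q hQ
      exact openSet_mono (huQ Q (hF.1 Q hQ).1).1 le_rfl le_rfl le_rfl
    · intro Q hQ
      exact ⟨(huQ Q (hF.1 Q hQ).1).2, (hF.1 Q hQ).1.2⟩
    · intro Q hQ hab _
      obtain ⟨hc1, hc2, hc3, hc4⟩ := coords_le (hF.1 Q hQ).1 (hF.1 Q hQ).2
      simp only [hgr] at hab ⊢
      have htu : t ≤ u Q := by
        rcases le_or_gt t Q.b with h | h
        · simp only [hu]
          exact le_sup_of_le_right (le_inf le_rfl h)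
        · exfalso
          have heq : u Q = Q.b := by
            simp only [hu, inf_eq_right.2 h.le, sup_eq_right.2 (hF.1 Q hQ).1.1]
          rw [heq] at hab
          exact lt_irrefl _ hab
      exact toSet_mono htu hc2 hc3 hc4
  have hptw : ∀ Q ∈ F, ENNReal.ofReal |Rect.inc f Q| ^ p ≤
      (ENNReal.ofReal |Rect.inc f (gl Q)| + ENNReal.ofReal |Rect.inc f (gr Q)|) ^ p := by
    intro Q hQ
    refine ENNReal.rpow_le_rpow ?_ hp0.le
    rw [← ENNReal.ofReal_add (abs_nonneg _) (abs_nonneg _)]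
    refine ENNReal.ofReal_le_ofReal ?_
    calc |Rect.inc f Q| = |Rect.inc f (gl Q) + Rect.inc f (gr Q)| := by
          rw [← inc_split_x f Q (u Q)]
      _ ≤ _ := abs_add_le _ _
  have hmink := ENNReal.Lp_add_le F (fun Q => ENNReal.ofReal |Rect.inc f (gl Q)|)
    (fun Q => ENNReal.ofReal |Rect.inc f (gr Q)|) hp
  have hfs : famSum p f F ^ (1/p) ≤
      W p f ⟨R.a, t, R.c, R.d⟩ ^ (1/p) + W p f ⟨t, R.b, R.c, R.d⟩ ^ (1/p) := by
    calc famSum p f F ^ (1/p)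
        ≤ (∑ Q ∈ F, (ENNReal.ofReal |Rect.inc f (gl Q)| + ENNReal.ofReal |Rect.inc f (gr Q)|) ^ p) ^ (1/p) := by
          refine ENNReal.rpow_le_rpow ?_ (by positivity)
          exact Finset.sum_le_sum hptw
      _ ≤ (∑ Q ∈ F, ENNReal.ofReal |Rect.inc f (gl Q)| ^ p) ^ (1/p)
            + (∑ Q ∈ F, ENNReal.ofReal |Rect.inc f (gr Q)| ^ p) ^ (1/p) := hmink
      _ ≤ _ := add_le_add (ENNReal.rpow_le_rpow hSl (by positivity))
            (ENNReal.rpow_le_rpow hSr (by positivity))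
  calc famSum p f F = (famSum p f F ^ (1/p)) ^ p := by
        rw [← ENNReal.rpow_mul, one_div, inv_mul_cancel₀ hp0.ne', ENNReal.rpow_one]
    _ ≤ _ := ENNReal.rpow_le_rpow hfs hp0.le


/-- consecutive points of a finite grid -/
def Consec (Z : Finset ℝ) (x₁ x₂ : ℝ) : Prop :=
  x₁ ∈ Z ∧ x₂ ∈ Z ∧ x₁ < x₂ ∧ ∀ z ∈ Z, z ∉ Set.Ioo x₁ x₂

lemma exists_consec {T : ℝ} (hT : 0 < T) (X : Finset ℝ) (h0 : (0:ℝ) ∈ X) (hTX : T ∈ X)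
    {x : ℝ} (hx : x ∈ Set.Icc (0:ℝ) T) :
    ∃ x₁ x₂ : ℝ, Consec X x₁ x₂ ∧ x ∈ Set.Icc x₁ x₂ := by
  classical
  by_cases hxT : x = T
  · subst hxT
    set S : Finset ℝ := X.filter (fun z => z < x) with hS
    have hSne : S.Nonempty := ⟨0, Finset.mem_filter.2 ⟨h0, by linarith [hx.1, hx.2]⟩⟩
    refine ⟨S.max' hSne, x, ⟨(Finset.mem_filter.1 (S.max'_mem hSne)).1, hTX,
      (Finset.mem_filter.1 (S.max'_mem hSne)).2, ?_⟩, ?_⟩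
    · intro z hz hmem
      have hzS : z ∈ S := Finset.mem_filter.2 ⟨hz, hmem.2⟩
      exact absurd (S.le_max' z hzS) (not_le.2 hmem.1)
    · exact ⟨(Finset.mem_filter.1 (S.max'_mem hSne)).2.le, le_rfl⟩
  · have hxltT : x < T := lt_of_le_of_ne hx.2 hxT
    set S₁ : Finset ℝ := X.filter (fun z => z ≤ x) with hS₁
    set S₂ : Finset ℝ := X.filter (fun z => x < z) with hS₂
    have hS₁ne : S₁.Nonempty := ⟨0, Finset.mem_filter.2 ⟨h0, hx.1⟩⟩
    have hS₂ne : S₂.Nonempty := ⟨T, Finset.mem_filter.2 ⟨hTX, hxltT⟩⟩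
    refine ⟨S₁.max' hS₁ne, S₂.min' hS₂ne, ⟨(Finset.mem_filter.1 (S₁.max'_mem hS₁ne)).1,
      (Finset.mem_filter.1 (S₂.min'_mem hS₂ne)).1, ?_, ?_⟩, ?_, ?_⟩
    · exact lt_of_le_of_lt (Finset.mem_filter.1 (S₁.max'_mem hS₁ne)).2
        (Finset.mem_filter.1 (S₂.min'_mem hS₂ne)).2
    · intro z hz hmem
      rcases le_or_gt z x with h | h
      · exact absurd (S₁.le_max' z (Finset.mem_filter.2 ⟨hz, h⟩)) (not_le.2 hmem.1)
      · exact absurd (S₂.min'_le z (Finset.mem_filter.2 ⟨hz, h⟩)) (not_le.2 hmem.2)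
    · exact (Finset.mem_filter.1 (S₁.max'_mem hS₁ne)).2
    · exact (Finset.mem_filter.1 (S₂.min'_mem hS₂ne)).2.le

lemma consec_unique {Z : Finset ℝ} {x₁ x₂ y₁ y₂ : ℝ} (h : Consec Z x₁ x₂)
    (h' : Consec Z y₁ y₂) (hov : (Set.Ioo x₁ x₂ ∩ Set.Ioo y₁ y₂).Nonempty) :
    x₁ = y₁ ∧ x₂ = y₂ := by
  obtain ⟨w, hw1, hw2⟩ := hov
  have h1 : y₁ ≤ x₁ := by
    by_contra hc
    push_neg at hc
    exact h.2.2.2 y₁ h'.1 ⟨hc, lt_trans hw2.1 hw1.2⟩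
  have h2 : x₁ ≤ y₁ := by
    by_contra hc
    push_neg at hc
    exact h'.2.2.2 x₁ h.1 ⟨hc, lt_trans hw1.1 hw2.2⟩
  have h3 : x₂ ≤ y₂ := by
    by_contra hc
    push_neg at hc
    exact h.2.2.2 y₂ h'.2.1 ⟨lt_trans hw1.1 hw2.2, hc⟩
  have h4 : y₂ ≤ x₂ := by
    by_contra hc
    push_neg at hc
    exact h'.2.2.2 x₂ h.2.1 ⟨lt_trans hw2.1 hw1.2, hc⟩
  exact ⟨le_antisymm h2 h1, le_antisymm h3 h4⟩

/-- the grid extension lemma: every essentially disjoint family sum is dominated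
by the controlled variation -/
lemma famSum_le_cVarSum {p T : ℝ} (hp : 1 ≤ p) (hT : 0 < T) (f : ℝ × ℝ → ℝ) {F : Finset Rect}
    (hF : IsFam ⟨0,T,0,T⟩ F) : famSum p f F ≤ cVarSum p f ⟨0,T,0,T⟩ := by
  classical
  set big : Rect := ⟨0,T,0,T⟩ with hbig
  set nd : Rect → Prop := fun Q => Q.a < Q.b ∧ Q.c < Q.d with hnd
  set Fn : Finset Rect := F.filter nd with hFn
  have hFnsub : Fn ⊆ F := Finset.filter_subset _ _
  have hmem : ∀ Q ∈ Fn, Q.Valid ∧ Q.toSet ⊆ big.toSet := fun Q hQ => hF.1 Q (hFnsub hQ)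
  have hcoords : ∀ Q ∈ Fn, 0 ≤ Q.a ∧ Q.b ≤ T ∧ 0 ≤ Q.c ∧ Q.d ≤ T := by
    intro Q hQ
    obtain ⟨h1, h2, h3, h4⟩ := coords_le (hmem Q hQ).1 (hmem Q hQ).2
    exact ⟨h1, h2, h3, h4⟩
  set X : Finset ℝ := insert 0 (insert T (Fn.image Rect.a ∪ Fn.image Rect.b)) with hX
  set Y : Finset ℝ := insert 0 (insert T (Fn.image Rect.c ∪ Fn.image Rect.d)) with hY
  have h0X : (0:ℝ) ∈ X := Finset.mem_insert_self _ _
  have hTXm : T ∈ X := Finset.mem_insert.2 (Or.inr (Finset.mem_insert_self _ _))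
  have h0Y : (0:ℝ) ∈ Y := Finset.mem_insert_self _ _
  have hTYm : T ∈ Y := Finset.mem_insert.2 (Or.inr (Finset.mem_insert_self _ _))
  have hXsub : ∀ z ∈ X, z ∈ Set.Icc (0:ℝ) T := by
    intro z hz
    rcases Finset.mem_insert.1 hz with rfl | hz
    · exact ⟨le_rfl, hT.le⟩
    rcases Finset.mem_insert.1 hz with rfl | hz
    · exact ⟨hT.le, le_rfl⟩
    rcases Finset.mem_union.1 hz with hz | hz <;>
      obtain ⟨Q, hQ, rfl⟩ := Finset.mem_image.1 hz
    · obtain ⟨h1, h2, _, _⟩ := hcoords Q hQ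
      exact ⟨h1, le_trans (hmem Q hQ).1.1 h2⟩
    · obtain ⟨h1, h2, _, _⟩ := hcoords Q hQ
      exact ⟨le_trans h1 (hmem Q hQ).1.1, h2⟩
  have hYsub : ∀ z ∈ Y, z ∈ Set.Icc (0:ℝ) T := by
    intro z hz
    rcases Finset.mem_insert.1 hz with rfl | hz
    · exact ⟨le_rfl, hT.le⟩
    rcases Finset.mem_insert.1 hz with rfl | hz
    · exact ⟨hT.le, le_rfl⟩
    rcases Finset.mem_union.1 hz with hz | hz <;>
      obtain ⟨Q, hQ, rfl⟩ := Finset.mem_image.1 hz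
    · obtain ⟨_, _, h3, h4⟩ := hcoords Q hQ
      exact ⟨h3, le_trans (hmem Q hQ).1.2 h4⟩
    · obtain ⟨_, _, h3, h4⟩ := hcoords Q hQ
      exact ⟨le_trans h3 (hmem Q hQ).1.2, h4⟩
  set cells : Finset Rect :=
    (((X ×ˢ X) ×ˢ (Y ×ˢ Y)).filter
      (fun q => Consec X q.1.1 q.1.2 ∧ Consec Y q.2.1 q.2.2)).image
      (fun q => ⟨q.1.1, q.1.2, q.2.1, q.2.2⟩) with hcells
  have mem_cells : ∀ C : Rect, C ∈ cells ↔ Consec X C.a C.b ∧ Consec Y C.c C.d := by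
    intro C
    constructor
    · intro hC
      obtain ⟨q, hq, rfl⟩ := Finset.mem_image.1 hC
      exact (Finset.mem_filter.1 hq).2
    · intro ⟨hx, hy⟩
      refine Finset.mem_image.2 ⟨((C.a, C.b), (C.c, C.d)), Finset.mem_filter.2 ⟨?_, hx, hy⟩, rfl⟩
      exact Finset.mem_product.2 ⟨Finset.mem_product.2 ⟨hx.1, hx.2.1⟩,
        Finset.mem_product.2 ⟨hy.1, hy.2.1⟩⟩
  have cells_disj : ∀ C ∈ cells, ∀ C' ∈ cells, C ≠ C' →
      Disjoint C.openSet C'.openSet := by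
    intro C hC C' hC' hne
    rw [Set.disjoint_iff_inter_eq_empty]
    by_contra hcon
    obtain ⟨z, hz⟩ := Set.nonempty_iff_ne_empty.2 hcon
    obtain ⟨hzC, hzC'⟩ := hz
    have hx := consec_unique ((mem_cells C).1 hC).1 ((mem_cells C').1 hC').1
      ⟨z.1, hzC.1, hzC'.1⟩
    have hy := consec_unique ((mem_cells C).1 hC).2 ((mem_cells C').1 hC').2
      ⟨z.2, hzC.2, hzC'.2⟩
    exact hne (by cases C; cases C'; simp only at hx hy; rw [hx.1, hx.2, hy.1, hy.2])
  have cell_sub : ∀ C ∈ cells, ∀ Q ∈ Fn, ¬ Disjoint C.openSet Q.openSet →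
      C.toSet ⊆ Q.toSet := by
    intro C hC Q hQ hnd'
    obtain ⟨z, hzC, hzQ⟩ := Set.not_disjoint_iff.1 hnd'
    have hQaX : Q.a ∈ X := Finset.mem_insert.2 (Or.inr (Finset.mem_insert.2 (Or.inr
      (Finset.mem_union.2 (Or.inl (Finset.mem_image_of_mem _ hQ))))))
    have hQbX : Q.b ∈ X := Finset.mem_insert.2 (Or.inr (Finset.mem_insert.2 (Or.inr
      (Finset.mem_union.2 (Or.inr (Finset.mem_image_of_mem _ hQ))))))
    have hQcY : Q.c ∈ Y := Finset.mem_insert.2 (Or.inr (Finset.mem_insert.2 (Or.inr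
      (Finset.mem_union.2 (Or.inl (Finset.mem_image_of_mem _ hQ))))))
    have hQdY : Q.d ∈ Y := Finset.mem_insert.2 (Or.inr (Finset.mem_insert.2 (Or.inr
      (Finset.mem_union.2 (Or.inr (Finset.mem_image_of_mem _ hQ))))))
    obtain ⟨hcx, hcy⟩ := (mem_cells C).1 hC
    have h1 : Q.a ≤ C.a := by
      by_contra hcon
      push_neg at hcon
      exact hcx.2.2.2 Q.a hQaX ⟨hcon, lt_trans hzQ.1.1 hzC.1.2⟩
    have h2 : C.b ≤ Q.b := by
      by_contra hcon
      push_neg at hcon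
      exact hcx.2.2.2 Q.b hQbX ⟨lt_trans hzC.1.1 hzQ.1.2, hcon⟩
    have h3 : Q.c ≤ C.c := by
      by_contra hcon
      push_neg at hcon
      exact hcy.2.2.2 Q.c hQcY ⟨hcon, lt_trans hzQ.2.1 hzC.2.2⟩
    have h4 : C.d ≤ Q.d := by
      by_contra hcon
      push_neg at hcon
      exact hcy.2.2.2 Q.d hQdY ⟨lt_trans hzC.2.1 hzQ.2.2, hcon⟩
    exact toSet_mono h1 h2 h3 h4
  set bad : Finset Rect := cells.filter (fun C => ∀ Q ∈ Fn, Disjoint C.openSet Q.openSet)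
    with hbad
  set P' : Finset Rect := Fn ∪ bad with hP'
  have hpart : IsPartition big P' := by
    refine ⟨?_, ?_, ?_⟩
    · intro Q hQ
      rcases Finset.mem_union.1 hQ with hQ | hQ
      · exact (hmem Q hQ).1
      · have := (mem_cells Q).1 (Finset.mem_filter.1 hQ).1
        exact ⟨this.1.2.2.1.le, this.2.2.2.1.le⟩
    · intro Q hQ Q' hQ' hne
      rcases Finset.mem_union.1 (Finset.mem_coe.1 hQ) with h1 | h1 <;>
        rcases Finset.mem_union.1 (Finset.mem_coe.1 hQ') with h2 | h2
      · exact hF.2 (Finset.mem_coe.2 (hFnsub h1)) (Finset.mem_coe.2 (hFnsub h2)) hne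
      · exact ((Finset.mem_filter.1 h2).2 Q h1).symm
      · exact (Finset.mem_filter.1 h1).2 Q' h2
      · exact cells_disj Q (Finset.mem_filter.1 h1).1 Q' (Finset.mem_filter.1 h2).1 hne
    · apply Set.eq_of_subset_of_subset
      · refine Set.iUnion₂_subset fun Q hQ => ?_
        rcases Finset.mem_union.1 hQ with hQ | hQ
        · exact (hmem Q hQ).2
        · have := (mem_cells Q).1 (Finset.mem_filter.1 hQ).1
          refine toSet_mono (hXsub Q.a this.1.1).1 (hXsub Q.b this.1.2.1).2
            (hYsub Q.c this.2.1).1 (hYsub Q.d this.2.2.1).2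
      · intro z hz
        have hz1 : z.1 ∈ Set.Icc (0:ℝ) T := hz.1
        have hz2 : z.2 ∈ Set.Icc (0:ℝ) T := hz.2
        obtain ⟨x₁, x₂, hcx, hxmem⟩ := exists_consec hT X h0X hTXm hz1
        obtain ⟨y₁, y₂, hcy, hymem⟩ := exists_consec hT Y h0Y hTYm hz2
        set C : Rect := ⟨x₁, x₂, y₁, y₂⟩ with hC
        have hCc : C ∈ cells := (mem_cells C).2 ⟨hcx, hcy⟩
        have hzC : z ∈ C.toSet := ⟨hxmem, hymem⟩
        by_cases hbadC : ∀ Q ∈ Fn, Disjoint C.openSet Q.openSet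
        · exact Set.mem_biUnion (Finset.mem_union.2 (Or.inr
            (Finset.mem_filter.2 ⟨hCc, hbadC⟩))) hzC
        · push_neg at hbadC
          obtain ⟨Q, hQFn, hndQ⟩ := hbadC
          exact Set.mem_biUnion (Finset.mem_union.2 (Or.inl hQFn))
            (cell_sub C hCc Q hQFn hndQ hzC)
  calc famSum p f F = famSum p f Fn :=
        (famSum_filter_nondeg hp f (fun Q hQ => (hF.1 Q hQ).1)).symm
    _ ≤ ∑ Q ∈ P', ENNReal.ofReal |Rect.inc f Q| ^ p :=
        Finset.sum_le_sum_of_subset Finset.subset_union_left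
    _ ≤ cVarSum p f big := by
        rw [cVarSum]
        exact le_iSup₂ (f := fun (P : Finset Rect) (_ : IsPartition big P) =>
          ∑ Q ∈ P, ENNReal.ofReal |Rect.inc f Q| ^ p) P' hpart

lemma W_le_cVarSum {p T : ℝ} (hp : 1 ≤ p) (hT : 0 < T) (f : ℝ × ℝ → ℝ) :
    W p f ⟨0,T,0,T⟩ ≤ cVarSum p f ⟨0,T,0,T⟩ :=
  W_le fun _ hF => famSum_le_cVarSum hp hT f hF


lemma famSum_ne_top {p : ℝ} (hp : 1 ≤ p) (f : ℝ × ℝ → ℝ) (F : Finset Rect) :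
    famSum p f F ≠ ⊤ := by
  rw [famSum]
  refine (ENNReal.sum_lt_top.2 fun Q _ => ?_).ne
  exact (ENNReal.rpow_lt_top_of_nonneg (le_trans zero_le_one hp) ENNReal.ofReal_ne_top)

lemma exists_fam_close {p : ℝ} {f : ℝ × ℝ → ℝ} {R : Rect} (htop : W p f R ≠ ⊤)
    {δ : ℝ≥0∞} (hδ : δ ≠ 0) :
    ∃ F : Finset Rect, IsFam R F ∧ W p f R ≤ famSum p f F + δ := by
  rcases eq_or_ne (W p f R) 0 with h0 | h0
  · exact ⟨∅, isFam_empty R, by simp [h0]⟩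
  have hlt : W p f R - δ < W p f R := ENNReal.sub_lt_self htop h0 hδ
  rw [W, lt_iSup_iff] at hlt
  obtain ⟨⟨F, hF⟩, hFlt⟩ := hlt
  exact ⟨F, hF, le_trans le_tsub_add (add_le_add hFlt.le le_rfl)⟩

def Rect.tr (R : Rect) : Rect := ⟨R.c, R.d, R.a, R.b⟩

lemma tr_inc (f : ℝ × ℝ → ℝ) (Q : Rect) :
    Rect.inc (fun z => f (z.2, z.1)) Q.tr = Rect.inc f Q := by
  simp only [Rect.inc, Rect.tr]
  ring

lemma tr_toSet (Q : Rect) : Q.tr.toSet = (fun z : ℝ × ℝ => ((z.2, z.1) : ℝ × ℝ)) ⁻¹' Q.toSet := by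
  ext z
  simp only [Rect.toSet, Rect.tr, Set.mem_preimage, Set.mem_prod]
  tauto

lemma tr_openSet (Q : Rect) :
    Q.tr.openSet = (fun z : ℝ × ℝ => ((z.2, z.1) : ℝ × ℝ)) ⁻¹' Q.openSet := by
  ext z
  simp only [Rect.openSet, Rect.tr, Set.mem_preimage, Set.mem_prod]
  tauto

lemma W_tr_le {p : ℝ} (f : ℝ × ℝ → ℝ) (R : Rect) :
    W p f R ≤ W p (fun z => f (z.2, z.1)) R.tr := by
  refine W_le fun F hF => ?_
  have htrinj : Function.Injective Rect.tr := by
    intro Q Q' h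
    cases Q; cases Q'
    simp only [Rect.tr, Rect.mk.injEq] at h
    simp [Rect.mk.injEq, h.1, h.2.1, h.2.2.1, h.2.2.2]
  have hfam : IsFam R.tr (F.image Rect.tr) := by
    constructor
    · intro G hG
      obtain ⟨Q, hQ, rfl⟩ := Finset.mem_image.1 hG
      obtain ⟨⟨hv1, hv2⟩, hsub⟩ := hF.1 Q hQ
      refine ⟨⟨hv2, hv1⟩, ?_⟩
      rw [tr_toSet, tr_toSet]
      exact fun z hz => hsub hz
    · intro G hG G' hG' hne
      obtain ⟨Q, hQ, rfl⟩ := Finset.mem_image.1 (Finset.mem_coe.1 hG)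
      obtain ⟨Q', hQ', rfl⟩ := Finset.mem_image.1 (Finset.mem_coe.1 hG')
      have hQne : Q ≠ Q' := fun h => hne (by rw [h])
      have hd : Disjoint Q.openSet Q'.openSet :=
        hF.2 (Finset.mem_coe.2 hQ) (Finset.mem_coe.2 hQ') hQne
      rw [Set.disjoint_left] at hd ⊢
      intro z hz hz'
      rw [tr_openSet] at hz hz'
      exact hd hz hz'
  have : famSum p f F = famSum p (fun z => f (z.2, z.1)) (F.image Rect.tr) := by
    rw [famSum, famSum, Finset.sum_image (fun x _ y _ h => htrinj h)]
    exact Finset.sum_congr rfl fun Q _ => by rw [tr_inc]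
  rw [this]
  exact famSum_le_W hfam

lemma W_tr {p : ℝ} (f : ℝ × ℝ → ℝ) (R : Rect) :
    W p (fun z => f (z.2, z.1)) R.tr = W p f R := by
  refine le_antisymm ?_ (W_tr_le f R)
  have h := W_tr_le (p := p) (fun z : ℝ × ℝ => f (z.2, z.1)) R.tr
  simpa [Rect.tr] using h


/-- the left half-strip at a vertical line has vanishing variation -/
lemma halfstrip_left {p T : ℝ} (hp : 1 ≤ p) (hT : 0 < T) (f : ℝ × ℝ → ℝ)
    (hcont : ContinuousOn f (Rect.toSet ⟨0,T,0,T⟩))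
    (hWtop : W p f ⟨0,T,0,T⟩ ≠ ⊤) {m : ℝ} (hm : m ∈ Set.Icc (0:ℝ) T)
    {γ : ℝ≥0∞} (hγ0 : γ ≠ 0) :
    ∃ ε : ℝ, 0 < ε ∧ W p f ⟨(m-ε) ⊔ 0, m, 0, T⟩ ≤ γ := by
  classical
  have hp0 : (0:ℝ) < p := lt_of_lt_of_le zero_lt_one hp
  set big : Rect := ⟨0,T,0,T⟩ with hbig
  set HS : ℝ → Rect := fun ε => ⟨(m-ε) ⊔ 0, m, 0, T⟩ with hHS
  have hHSsub : ∀ ε : ℝ, (HS ε).toSet ⊆ big.toSet := by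
    intro ε
    exact toSet_mono le_sup_right hm.2 le_rfl le_rfl
  set v1 : ℝ≥0∞ := W p f (HS 1) with hv1
  have hv1top : v1 ≠ ⊤ := ne_top_of_le_ne_top hWtop (W_mono (hHSsub 1))
  set δ : ℝ≥0∞ := γ / 2 with hδ
  have hδ0 : δ ≠ 0 := by
    simp [hδ, ENNReal.div_eq_zero_iff, hγ0]
  obtain ⟨F, hFfam, hvF⟩ := exists_fam_close hv1top hδ0
  have hQm : ∀ Q ∈ F, Q.Valid ∧ Q.toSet ⊆ (HS 1).toSet := hFfam.1
  have hQb : ∀ Q ∈ F, (m-1) ⊔ 0 ≤ Q.a ∧ Q.b ≤ m ∧ 0 ≤ Q.c ∧ Q.d ≤ T := by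
    intro Q hQ
    exact coords_le (hQm Q hQ).1 (hQm Q hQ).2
  set u : ℝ → Rect → ℝ := fun η Q => Q.a ⊔ ((m - η) ⊓ Q.b) with hudef
  have humem : ∀ (η : ℝ), ∀ Q ∈ F, Q.a ≤ u η Q ∧ u η Q ≤ Q.b := by
    intro η Q hQ
    exact ⟨le_sup_left, sup_le (hQm Q hQ).1.1 inf_le_right⟩
  have huIcc : ∀ (η : ℝ), ∀ Q ∈ F, u η Q ∈ Set.Icc (0:ℝ) T := by
    intro η Q hQ
    obtain ⟨h1, h2⟩ := humem η Q hQ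
    obtain ⟨hb1, hb2, _, _⟩ := hQb Q hQ
    exact ⟨le_trans (le_trans le_sup_right hb1) h1, le_trans h2 (le_trans hb2 hm.2)⟩
  set S : ℝ → ℝ≥0∞ := fun η => ∑ Q ∈ F,
    ENNReal.ofReal |Rect.inc f ⟨Q.a, u η Q, Q.c, Q.d⟩| ^ p with hSdef
  have hS0 : S 0 = famSum p f F := by
    rw [hSdef, famSum]
    refine Finset.sum_congr rfl fun Q hQ => ?_
    have h1 : u 0 Q = Q.b := by
      simp only [hudef, sub_zero]
      rw [inf_eq_right.2 (hQb Q hQ).2.1, sup_eq_right.2 (hQm Q hQ).1.1]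
    simp only [Rect.inc, h1]
  have hfmem : ∀ (y : ℝ), 0 ≤ y → y ≤ T → ∀ Q ∈ F,
      Continuous fun η : ℝ => f (u η Q, y) := by
    intro y hy1 hy2 Q hQ
    refine hcont.comp_continuous ?_ ?_
    · have : Continuous fun η : ℝ => u η Q := by
        simp only [hudef]
        fun_prop
      exact this.prodMk continuous_const
    · intro η
      exact ⟨huIcc η Q hQ, hy1, hy2⟩
  have hScont : Continuous S := by
    rw [hSdef]
    refine continuous_finset_sum F fun Q hQ => ?_
    refine ENNReal.continuous_rpow_const.comp (ENNReal.continuous_ofReal.comp ?_)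
    refine continuous_abs.comp ?_
    obtain ⟨_, _, h3, h4⟩ := hQb Q hQ
    have hc1 := hfmem Q.d (le_trans h3 (hQm Q hQ).1.2) h4 Q hQ
    have hc2 := hfmem Q.c h3 (le_trans (hQm Q hQ).1.2 h4) Q hQ
    simp only [Rect.inc]
    exact ((hc1.sub continuous_const).sub hc2).add continuous_const
  have hS0top : S 0 ≠ ⊤ := by
    rw [hS0]
    exact famSum_ne_top hp f F
  have hev1 : ∀ᶠ η in 𝓝[>] (0:ℝ), S η ∈ Set.Icc (S 0 - δ) (S 0 + δ) := by
    have htd : Filter.Tendsto S (𝓝[>] (0:ℝ)) (𝓝 (S 0)) :=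
      (hScont.tendsto 0).mono_left nhdsWithin_le_nhds
    exact (ENNReal.tendsto_nhds hS0top).1 htd δ (pos_iff_ne_zero.2 hδ0)
  have hev2 : ∀ᶠ η in 𝓝[>] (0:ℝ), η < 1 :=
    Filter.eventually_iff_exists_mem.2 ⟨Set.Iio 1, nhdsWithin_le_nhds (Iio_mem_nhds one_pos),
      fun η hη => hη⟩
  have hev3 : ∀ᶠ η in 𝓝[>] (0:ℝ), 0 < η := eventually_mem_nhdsWithin
  obtain ⟨η, hηS, hη1, hη0⟩ := (hev1.and (hev2.and hev3)).exists
  set Mη : Rect := ⟨(m-1) ⊔ 0, (m-η) ⊔ ((m-1) ⊔ 0), 0, T⟩ with hMη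
  have hpush : S η ≤ W p f Mη := by
    rw [hSdef]
    refine sum_push_le hp f hFfam (fun Q => ⟨Q.a, u η Q, Q.c, Q.d⟩) ?_ ?_ ?_
    · intro Q hQ
      exact openSet_mono le_rfl (humem η Q hQ).2 le_rfl le_rfl
    · intro Q hQ
      exact ⟨(humem η Q hQ).1, (hQm Q hQ).1.2⟩
    · intro Q hQ hab _
      obtain ⟨hb1, hb2, hb3, hb4⟩ := hQb Q hQ
      have hum : u η Q ≤ m - η := by
        have h' : Q.a < (m - η) ⊓ Q.b := by
          by_contra hcon
          push_neg at hcon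
          have heq : u η Q = Q.a := sup_eq_left.2 hcon
          rw [show (⟨Q.a, u η Q, Q.c, Q.d⟩ : Rect).a = Q.a from rfl,
            show (⟨Q.a, u η Q, Q.c, Q.d⟩ : Rect).b = u η Q from rfl, heq] at hab
          exact lt_irrefl _ hab
        simp only [hudef]
        exact sup_le (h'.le.trans inf_le_left) inf_le_left
      exact toSet_mono hb1 (hum.trans le_sup_left) hb3 hb4
  have hMsub : Mη.toSet ⊆ (HS 1).toSet := by
    refine toSet_mono le_rfl ?_ le_rfl le_rfl
    refine sup_le (by linarith) (sup_le (by linarith [hm.1]) hm.1)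
  have hHSη : (HS η).toSet ⊆ (HS 1).toSet := by
    refine toSet_mono ?_ le_rfl le_rfl le_rfl
    exact sup_le_sup_right (by linarith) 0
  have hE : (m-η) ⊔ ((m-1) ⊔ 0) = (m-η) ⊔ 0 := by
    rw [← sup_assoc]
    congr 1
    exact sup_eq_left.2 (by linarith)
  have hdisj : Disjoint Mη.openSet (HS η).openSet := by
    rw [Set.disjoint_left]
    intro z hz hz'
    have h1 : z.1 < (m-η) ⊔ ((m-1) ⊔ 0) := hz.1.2
    have h2 : (m-η) ⊔ 0 < z.1 := hz'.1.1
    rw [hE] at h1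
    linarith
  have hsuper : W p f Mη + W p f (HS η) ≤ v1 :=
    W_add_W_le hp f hMsub hHSη hdisj
  have hMtop : W p f Mη ≠ ⊤ :=
    ne_top_of_le_ne_top hv1top (W_mono hMsub)
  have hfS : famSum p f F ≤ S η + δ := by
    calc famSum p f F = S 0 := hS0.symm
      _ ≤ (S 0 - δ) + δ := le_tsub_add
      _ ≤ S η + δ := add_le_add hηS.1 le_rfl
  have hkey : W p f Mη + W p f (HS η) ≤ W p f Mη + γ := by
    calc W p f Mη + W p f (HS η) ≤ v1 := hsuper
      _ ≤ famSum p f F + δ := hvF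
      _ ≤ (S η + δ) + δ := add_le_add hfS le_rfl
      _ ≤ (W p f Mη + δ) + δ := by gcongr
      _ = W p f Mη + γ := by rw [add_assoc, hδ, ENNReal.add_halves]
  exact ⟨η, hη0, (ENNReal.add_le_add_iff_left hMtop).1 hkey⟩


/-- the right half-strip at a vertical line has vanishing variation -/
lemma halfstrip_right {p T : ℝ} (hp : 1 ≤ p) (hT : 0 < T) (f : ℝ × ℝ → ℝ)
    (hcont : ContinuousOn f (Rect.toSet ⟨0,T,0,T⟩))
    (hWtop : W p f ⟨0,T,0,T⟩ ≠ ⊤) {m : ℝ} (hm : m ∈ Set.Icc (0:ℝ) T)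
    {γ : ℝ≥0∞} (hγ0 : γ ≠ 0) :
    ∃ ε : ℝ, 0 < ε ∧ W p f ⟨m, (m+ε) ⊓ T, 0, T⟩ ≤ γ := by
  classical
  have hp0 : (0:ℝ) < p := lt_of_lt_of_le zero_lt_one hp
  set big : Rect := ⟨0,T,0,T⟩ with hbig
  set RS : ℝ → Rect := fun ε => ⟨m, (m+ε) ⊓ T, 0, T⟩ with hRS
  have hRSsub : ∀ ε : ℝ, (RS ε).toSet ⊆ big.toSet := by
    intro ε
    exact toSet_mono hm.1 inf_le_right le_rfl le_rfl
  set v1 : ℝ≥0∞ := W p f (RS 1) with hv1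
  have hv1top : v1 ≠ ⊤ := ne_top_of_le_ne_top hWtop (W_mono (hRSsub 1))
  set δ : ℝ≥0∞ := γ / 2 with hδ
  have hδ0 : δ ≠ 0 := by
    simp [hδ, ENNReal.div_eq_zero_iff, hγ0]
  obtain ⟨F, hFfam, hvF⟩ := exists_fam_close hv1top hδ0
  have hQm : ∀ Q ∈ F, Q.Valid ∧ Q.toSet ⊆ (RS 1).toSet := hFfam.1
  have hQb : ∀ Q ∈ F, m ≤ Q.a ∧ Q.b ≤ (m+1) ⊓ T ∧ 0 ≤ Q.c ∧ Q.d ≤ T := by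
    intro Q hQ
    exact coords_le (hQm Q hQ).1 (hQm Q hQ).2
  set u : ℝ → Rect → ℝ := fun η Q => Q.b ⊓ ((m + η) ⊔ Q.a) with hudef
  have humem : ∀ (η : ℝ), ∀ Q ∈ F, Q.a ≤ u η Q ∧ u η Q ≤ Q.b := by
    intro η Q hQ
    exact ⟨le_inf (hQm Q hQ).1.1 le_sup_right, inf_le_left⟩
  have huIcc : ∀ (η : ℝ), ∀ Q ∈ F, u η Q ∈ Set.Icc (0:ℝ) T := by
    intro η Q hQ
    obtain ⟨h1, h2⟩ := humem η Q hQ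
    obtain ⟨hb1, hb2, _, _⟩ := hQb Q hQ
    exact ⟨le_trans (le_trans hm.1 hb1) h1, le_trans h2 (le_trans hb2 inf_le_right)⟩
  set S : ℝ → ℝ≥0∞ := fun η => ∑ Q ∈ F,
    ENNReal.ofReal |Rect.inc f ⟨u η Q, Q.b, Q.c, Q.d⟩| ^ p with hSdef
  have hS0 : S 0 = famSum p f F := by
    rw [hSdef, famSum]
    refine Finset.sum_congr rfl fun Q hQ => ?_
    have h1 : u 0 Q = Q.a := by
      simp only [hudef, add_zero]
      rw [sup_eq_right.2 (hQb Q hQ).1, inf_eq_right.2 (hQm Q hQ).1.1]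
    simp only [Rect.inc, h1]
  have hfmem : ∀ (y : ℝ), 0 ≤ y → y ≤ T → ∀ Q ∈ F,
      Continuous fun η : ℝ => f (u η Q, y) := by
    intro y hy1 hy2 Q hQ
    refine hcont.comp_continuous ?_ ?_
    · have : Continuous fun η : ℝ => u η Q := by
        simp only [hudef]
        fun_prop
      exact this.prodMk continuous_const
    · intro η
      exact ⟨huIcc η Q hQ, hy1, hy2⟩
  have hScont : Continuous S := by
    rw [hSdef]
    refine continuous_finset_sum F fun Q hQ => ?_
    refine ENNReal.continuous_rpow_const.comp (ENNReal.continuous_ofReal.comp ?_)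
    refine continuous_abs.comp ?_
    obtain ⟨_, _, h3, h4⟩ := hQb Q hQ
    have hc1 := hfmem Q.d (le_trans h3 (hQm Q hQ).1.2) h4 Q hQ
    have hc2 := hfmem Q.c h3 (le_trans (hQm Q hQ).1.2 h4) Q hQ
    simp only [Rect.inc]
    exact ((continuous_const.sub hc1).sub continuous_const).add hc2
  have hS0top : S 0 ≠ ⊤ := by
    rw [hS0]
    exact famSum_ne_top hp f F
  have hev1 : ∀ᶠ η in 𝓝[>] (0:ℝ), S η ∈ Set.Icc (S 0 - δ) (S 0 + δ) := by
    have htd : Filter.Tendsto S (𝓝[>] (0:ℝ)) (𝓝 (S 0)) :=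
      (hScont.tendsto 0).mono_left nhdsWithin_le_nhds
    exact (ENNReal.tendsto_nhds hS0top).1 htd δ (pos_iff_ne_zero.2 hδ0)
  have hev2 : ∀ᶠ η in 𝓝[>] (0:ℝ), η < 1 :=
    Filter.eventually_iff_exists_mem.2 ⟨Set.Iio 1, nhdsWithin_le_nhds (Iio_mem_nhds one_pos),
      fun η hη => hη⟩
  have hev3 : ∀ᶠ η in 𝓝[>] (0:ℝ), 0 < η := eventually_mem_nhdsWithin
  obtain ⟨η, hηS, hη1, hη0⟩ := (hev1.and (hev2.and hev3)).exists
  set Mη : Rect := ⟨(m+η) ⊓ ((m+1) ⊓ T), (m+1) ⊓ T, 0, T⟩ with hMη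
  have hpush : S η ≤ W p f Mη := by
    rw [hSdef]
    refine sum_push_le hp f hFfam (fun Q => ⟨u η Q, Q.b, Q.c, Q.d⟩) ?_ ?_ ?_
    · intro Q hQ
      exact openSet_mono (humem η Q hQ).1 le_rfl le_rfl le_rfl
    · intro Q hQ
      exact ⟨(humem η Q hQ).2, (hQm Q hQ).1.2⟩
    · intro Q hQ hab _
      obtain ⟨hb1, hb2, hb3, hb4⟩ := hQb Q hQ
      have hum : m + η ≤ u η Q := by
        have h' : (m + η) ⊔ Q.a < Q.b := by
          by_contra hcon
          push_neg at hcon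
          have heq : u η Q = Q.b := inf_eq_left.2 hcon
          rw [show (⟨u η Q, Q.b, Q.c, Q.d⟩ : Rect).a = u η Q from rfl,
            show (⟨u η Q, Q.b, Q.c, Q.d⟩ : Rect).b = Q.b from rfl, heq] at hab
          exact lt_irrefl _ hab
        have heq : u η Q = (m + η) ⊔ Q.a := inf_eq_right.2 h'.le
        rw [heq]
        exact le_sup_left
      exact toSet_mono (inf_le_left.trans hum) hb2 hb3 hb4
  have hMsub : Mη.toSet ⊆ (RS 1).toSet := by
    refine toSet_mono ?_ le_rfl le_rfl le_rfl
    exact le_inf (by linarith) (le_inf (by linarith) hm.2)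
  have hRSη : (RS η).toSet ⊆ (RS 1).toSet := by
    refine toSet_mono le_rfl ?_ le_rfl le_rfl
    exact inf_le_inf (by linarith) le_rfl
  have hE : (m+η) ⊓ ((m+1) ⊓ T) = (m+η) ⊓ T := by
    rw [← inf_assoc]
    congr 1
    exact inf_eq_left.2 (by linarith)
  have hdisj : Disjoint Mη.openSet (RS η).openSet := by
    rw [Set.disjoint_left]
    intro z hz hz'
    have h1 : (m+η) ⊓ ((m+1) ⊓ T) < z.1 := hz.1.1
    have h2 : z.1 < (m+η) ⊓ T := hz'.1.2
    rw [hE] at h1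
    linarith
  have hsuper : W p f Mη + W p f (RS η) ≤ v1 :=
    W_add_W_le hp f hMsub hRSη hdisj
  have hMtop : W p f Mη ≠ ⊤ :=
    ne_top_of_le_ne_top hv1top (W_mono hMsub)
  have hfS : famSum p f F ≤ S η + δ := by
    calc famSum p f F = S 0 := hS0.symm
      _ ≤ (S 0 - δ) + δ := le_tsub_add
      _ ≤ S η + δ := add_le_add hηS.1 le_rfl
  have hkey : W p f Mη + W p f (RS η) ≤ W p f Mη + γ := by
    calc W p f Mη + W p f (RS η) ≤ v1 := hsuper
      _ ≤ famSum p f F + δ := hvF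
      _ ≤ (S η + δ) + δ := add_le_add hfS le_rfl
      _ ≤ (W p f Mη + δ) + δ := by gcongr
      _ = W p f Mη + γ := by rw [add_assoc, hδ, ENNReal.add_halves]
  exact ⟨η, hη0, (ENNReal.add_le_add_iff_left hMtop).1 hkey⟩


/-- full vertical strips have vanishing variation -/
lemma strip_vert {p T : ℝ} (hp : 1 ≤ p) (hT : 0 < T) (f : ℝ × ℝ → ℝ)
    (hcont : ContinuousOn f (Rect.toSet ⟨0,T,0,T⟩))
    (hWtop : W p f ⟨0,T,0,T⟩ ≠ ⊤) {m : ℝ} (hm : m ∈ Set.Icc (0:ℝ) T)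
    {γ : ℝ≥0∞} (hγ0 : γ ≠ 0) :
    ∃ ε : ℝ, 0 < ε ∧ W p f ⟨(m-ε) ⊔ 0, (m+ε) ⊓ T, 0, T⟩ ≤ γ := by
  have hp0 : (0:ℝ) < p := lt_of_lt_of_le zero_lt_one hp
  have h2top : ((2:ℝ≥0∞) ^ p) ≠ ⊤ :=
    ENNReal.rpow_ne_top_of_nonneg hp0.le (by norm_num)
  set γ' : ℝ≥0∞ := γ / (2:ℝ≥0∞) ^ p with hγ'
  have hγ'0 : γ' ≠ 0 := by
    simp [hγ', ENNReal.div_eq_zero_iff, hγ0, h2top]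
  obtain ⟨ε₁, hε₁0, hε₁⟩ := halfstrip_left hp hT f hcont hWtop hm hγ'0
  obtain ⟨ε₂, hε₂0, hε₂⟩ := halfstrip_right hp hT f hcont hWtop hm hγ'0
  set ε : ℝ := min ε₁ ε₂ with hε
  have hε0' : 0 < ε := lt_min hε₁0 hε₂0
  have hεle1 : ε ≤ ε₁ := min_le_left _ _
  have hεle2 : ε ≤ ε₂ := min_le_right _ _
  refine ⟨ε, hε0', ?_⟩
  have hL : W p f ⟨(m-ε) ⊔ 0, m, 0, T⟩ ≤ γ' := by
    refine le_trans (W_mono (R' := ⟨(m-ε₁) ⊔ 0, m, 0, T⟩) (toSet_mono ?_ le_rfl le_rfl le_rfl)) hε₁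
    exact sup_le_sup_right (by linarith) 0
  have hR : W p f ⟨m, (m+ε) ⊓ T, 0, T⟩ ≤ γ' := by
    refine le_trans (W_mono (R' := ⟨m, (m+ε₂) ⊓ T, 0, T⟩) (toSet_mono le_rfl ?_ le_rfl le_rfl)) hε₂
    exact inf_le_inf (by linarith) le_rfl
  have hsplit := W_split_x (R := ⟨(m-ε) ⊔ 0, (m+ε) ⊓ T, 0, T⟩) (t := m) hp f
    (sup_le (by linarith) hm.1) (le_inf (by linarith) hm.2)
  have hcanc : ∀ x : ℝ≥0∞, (x ^ (1/p)) ^ p = x := by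
    intro x
    rw [← ENNReal.rpow_mul, one_div, inv_mul_cancel₀ hp0.ne', ENNReal.rpow_one]
  calc W p f ⟨(m-ε) ⊔ 0, (m+ε) ⊓ T, 0, T⟩
      ≤ (W p f ⟨(m-ε) ⊔ 0, m, 0, T⟩ ^ (1/p) + W p f ⟨m, (m+ε) ⊓ T, 0, T⟩ ^ (1/p)) ^ p := hsplit
    _ ≤ (2:ℝ≥0∞) ^ (p-1) * ((W p f ⟨(m-ε) ⊔ 0, m, 0, T⟩ ^ (1/p)) ^ p
          + (W p f ⟨m, (m+ε) ⊓ T, 0, T⟩ ^ (1/p)) ^ p) :=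
        ENNReal.rpow_add_le_mul_rpow_add_rpow _ _ hp
    _ = (2:ℝ≥0∞) ^ (p-1) * (W p f ⟨(m-ε) ⊔ 0, m, 0, T⟩ + W p f ⟨m, (m+ε) ⊓ T, 0, T⟩) := by
        rw [hcanc, hcanc]
    _ ≤ (2:ℝ≥0∞) ^ (p-1) * (γ' + γ') := by gcongr
    _ = (2:ℝ≥0∞) ^ p * γ' := by
        have h2 : (2:ℝ≥0∞) ^ (p-1) * 2 = (2:ℝ≥0∞) ^ p := by
          nth_rewrite 2 [show ((2:ℝ≥0∞)) = (2:ℝ≥0∞) ^ (1:ℝ) from (ENNReal.rpow_one 2).symm]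
          rw [← ENNReal.rpow_add _ _ (by norm_num) (by norm_num)]
          norm_num
        rw [← two_mul, ← mul_assoc, h2]
    _ ≤ γ := by
        rw [hγ']
        exact ENNReal.mul_div_le

/-- full horizontal strips have vanishing variation -/
lemma strip_horiz {p T : ℝ} (hp : 1 ≤ p) (hT : 0 < T) (f : ℝ × ℝ → ℝ)
    (hcont : ContinuousOn f (Rect.toSet ⟨0,T,0,T⟩))
    (hWtop : W p f ⟨0,T,0,T⟩ ≠ ⊤) {m : ℝ} (hm : m ∈ Set.Icc (0:ℝ) T)
    {γ : ℝ≥0∞} (hγ0 : γ ≠ 0) :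
    ∃ ε : ℝ, 0 < ε ∧ W p f ⟨0, T, (m-ε) ⊔ 0, (m+ε) ⊓ T⟩ ≤ γ := by
  set fT : ℝ × ℝ → ℝ := fun z => f (z.2, z.1) with hfT
  have hcontT : ContinuousOn fT (Rect.toSet ⟨0,T,0,T⟩) := by
    refine ContinuousOn.comp hcont (by fun_prop) ?_
    intro z hz
    exact ⟨hz.2, hz.1⟩
  have hWT : W p fT ⟨0,T,0,T⟩ = W p f ⟨0,T,0,T⟩ := W_tr f ⟨0,T,0,T⟩
  obtain ⟨ε, hε0, hε⟩ := strip_vert hp hT fT hcontT (by rw [hWT]; exact hWtop) hm hγ0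
  refine ⟨ε, hε0, ?_⟩
  have := W_tr (p := p) f ⟨0, T, (m-ε) ⊔ 0, (m+ε) ⊓ T⟩
  rw [show (Rect.tr ⟨0, T, (m-ε) ⊔ 0, (m+ε) ⊓ T⟩) = ⟨(m-ε) ⊔ 0, (m+ε) ⊓ T, 0, T⟩ from rfl] at this
  rw [← this]
  exact hε


lemma real_rpow_add_le {p : ℝ} (hp : 1 ≤ p) {B u e : ℝ} (hB : 0 ≤ B) (hu0 : 0 ≤ u)
    (huB : u ≤ B) (he0 : 0 ≤ e) (he1 : e ≤ 1) :
    (u + e) ^ p ≤ u ^ p + p * (B + 1) ^ (p - 1) * e := by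
  have hp0 : (0:ℝ) < p := lt_of_lt_of_le zero_lt_one hp
  set s : Set ℝ := Set.Icc 0 (B + 1) with hs
  have hderiv : ∀ x ∈ s, HasDerivWithinAt (fun x : ℝ => x ^ p)
      ((fun x : ℝ => p * x ^ (p - 1)) x) s x := by
    intro x hx
    exact (Real.hasDerivAt_rpow_const (Or.inr hp)).hasDerivWithinAt
  have hbound : ∀ x ∈ s, ‖(fun x : ℝ => p * x ^ (p - 1)) x‖ ≤ p * (B + 1) ^ (p - 1) := by
    intro x hx
    rw [Real.norm_eq_abs, abs_mul, abs_of_nonneg hp0.le,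
      abs_of_nonneg (Real.rpow_nonneg hx.1 _)]
    exact mul_le_mul_of_nonneg_left
      (Real.rpow_le_rpow hx.1 hx.2 (by linarith)) hp0.le
  have hmvt := Convex.norm_image_sub_le_of_norm_hasDerivWithin_le hderiv hbound
    (convex_Icc 0 (B+1)) (⟨hu0, by linarith⟩ : u ∈ s)
    (⟨by linarith, by linarith⟩ : u + e ∈ s)
  rw [Real.norm_eq_abs, Real.norm_eq_abs] at hmvt
  have h1 : (u + e) ^ p - u ^ p ≤ p * (B + 1) ^ (p - 1) * e := by
    calc (u + e) ^ p - u ^ p ≤ |(u + e) ^ p - u ^ p| := le_abs_self _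
      _ ≤ p * (B + 1) ^ (p - 1) * |u + e - u| := hmvt
      _ = p * (B + 1) ^ (p - 1) * e := by rw [add_sub_cancel_left, abs_of_nonneg he0]
  linarith

lemma aux_pow {p : ℝ} (hp : 1 ≤ p) (M γ : ℝ≥0∞) (hM : M ≠ ⊤) (hγ : γ ≠ 0) :
    ∃ γ' : ℝ≥0∞, γ' ≠ 0 ∧
      ∀ v : ℝ≥0∞, v ≤ M → (v ^ (1/p) + 4 * γ' ^ (1/p)) ^ p ≤ v + γ := by
  have hp0 : (0:ℝ) < p := lt_of_lt_of_le zero_lt_one hp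
  rcases eq_or_ne γ ⊤ with rfl | hγtop
  · refine ⟨1, one_ne_zero, fun v hv => ?_⟩
    rw [add_top]
    exact le_top
  set γr : ℝ := min γ.toReal 1 with hγr
  have hγr0 : 0 < γr := lt_min (ENNReal.toReal_pos hγ hγtop) one_pos
  set Br : ℝ := M.toReal ^ (1/p) with hBr
  have hBr0 : 0 ≤ Br := Real.rpow_nonneg ENNReal.toReal_nonneg _
  set C : ℝ := p * (Br + 1) ^ (p - 1) with hC
  have hC0 : 0 < C := mul_pos hp0 (Real.rpow_pos_of_pos (by linarith) _)
  set er : ℝ := min 1 (γr / C) with her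
  have her0 : 0 < er := lt_min one_pos (div_pos hγr0 hC0)
  have herC : C * er ≤ γr := by
    calc C * er ≤ C * (γr / C) := mul_le_mul_of_nonneg_left (min_le_right _ _) hC0.le
      _ = γr := by field_simp
  refine ⟨ENNReal.ofReal ((er/4) ^ p), ?_, ?_⟩
  · simp only [ne_eq, ENNReal.ofReal_eq_zero, not_le]
    exact Real.rpow_pos_of_pos (by linarith) _
  · intro v hv
    have hvtop : v ≠ ⊤ := ne_top_of_le_ne_top hM hv
    set vr : ℝ := v.toReal with hvr
    have hvr0 : 0 ≤ vr := ENNReal.toReal_nonneg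
    have hvrM : vr ≤ M.toReal := ENNReal.toReal_mono hM hv
    have hur : vr ^ (1/p) ≤ Br := Real.rpow_le_rpow hvr0 hvrM (by positivity)
    have hkey : (vr ^ (1/p) + er) ^ p ≤ vr + γr := by
      have := real_rpow_add_le hp hBr0 (Real.rpow_nonneg hvr0 _) hur her0.le
        (min_le_left _ _)
      calc (vr ^ (1/p) + er) ^ p ≤ (vr ^ (1/p)) ^ p + C * er := by
            rw [hC]
            exact this
        _ ≤ vr + γr := by
            rw [← Real.rpow_mul hvr0, one_div, inv_mul_cancel₀ hp0.ne', Real.rpow_one]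
            linarith
    have hg4 : (4:ℝ≥0∞) * (ENNReal.ofReal ((er/4) ^ p)) ^ (1/p) = ENNReal.ofReal er := by
      rw [ENNReal.ofReal_rpow_of_nonneg (by positivity) (by positivity),
        ← Real.rpow_mul (by positivity), mul_one_div, div_self hp0.ne', Real.rpow_one,
        show (4:ℝ≥0∞) = ENNReal.ofReal 4 by norm_num,
        ← ENNReal.ofReal_mul (by norm_num)]
      congr 1
      ring
    have hv14 : v ^ (1/p) = ENNReal.ofReal (vr ^ (1/p)) := by
      rw [hvr, ← ENNReal.ofReal_rpow_of_nonneg hvr0 (by positivity),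
        ENNReal.ofReal_toReal hvtop]
    calc (v ^ (1/p) + 4 * (ENNReal.ofReal ((er/4) ^ p)) ^ (1/p)) ^ p
        = ENNReal.ofReal ((vr ^ (1/p) + er) ^ p) := by
          rw [hg4, hv14, ← ENNReal.ofReal_add (by positivity) her0.le,
            ENNReal.ofReal_rpow_of_nonneg (by positivity) hp0.le]
      _ ≤ ENNReal.ofReal (vr + γr) := ENNReal.ofReal_le_ofReal hkey
      _ = ENNReal.ofReal vr + ENNReal.ofReal γr :=
          ENNReal.ofReal_add hvr0 hγr0.le
      _ ≤ v + γ := by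
          refine add_le_add ?_ ?_
          · rw [hvr, ENNReal.ofReal_toReal hvtop]
          · calc ENNReal.ofReal γr ≤ ENNReal.ofReal γ.toReal :=
                ENNReal.ofReal_le_ofReal (min_le_left _ _)
              _ = γ := ENNReal.ofReal_toReal hγtop

lemma W_split_x' {p : ℝ} (hp : 1 ≤ p) (f : ℝ × ℝ → ℝ) {R : Rect} {t : ℝ}
    (h1 : R.a ≤ t) (h2 : t ≤ R.b) :
    W p f R ^ (1/p) ≤ W p f ⟨R.a, t, R.c, R.d⟩ ^ (1/p) + W p f ⟨t, R.b, R.c, R.d⟩ ^ (1/p) := by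
  have hp0 : (0:ℝ) < p := lt_of_lt_of_le zero_lt_one hp
  calc W p f R ^ (1/p)
      ≤ ((W p f ⟨R.a, t, R.c, R.d⟩ ^ (1/p) + W p f ⟨t, R.b, R.c, R.d⟩ ^ (1/p)) ^ p) ^ (1/p) :=
        ENNReal.rpow_le_rpow (W_split_x hp f h1 h2) (by positivity)
    _ = _ := by
        rw [← ENNReal.rpow_mul, mul_one_div, div_self hp0.ne', ENNReal.rpow_one]

lemma W_split_y' {p : ℝ} (hp : 1 ≤ p) (f : ℝ × ℝ → ℝ) {R : Rect} {t : ℝ}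
    (h1 : R.c ≤ t) (h2 : t ≤ R.d) :
    W p f R ^ (1/p) ≤ W p f ⟨R.a, R.b, R.c, t⟩ ^ (1/p) + W p f ⟨R.a, R.b, t, R.d⟩ ^ (1/p) := by
  have h := W_split_x' (R := R.tr) (t := t) hp (fun z => f (z.2, z.1)) h1 h2
  rw [show (R.tr : Rect) = Rect.tr R from rfl, W_tr,
    show (⟨R.tr.a, t, R.tr.c, R.tr.d⟩ : Rect) = Rect.tr ⟨R.a, R.b, R.c, t⟩ from rfl, W_tr,
    show (⟨t, R.tr.b, R.tr.c, R.tr.d⟩ : Rect) = Rect.tr ⟨R.a, R.b, t, R.d⟩ from rfl, W_tr] at h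
  exact h


lemma W_continuousOn {p T : ℝ} (hp : 1 ≤ p) (hT : 0 < T) (f : ℝ × ℝ → ℝ)
    (hcont : ContinuousOn f (Rect.toSet ⟨0,T,0,T⟩))
    (hWtop : W p f ⟨0,T,0,T⟩ ≠ ⊤) :
    ContinuousOn (fun x : ℝ × ℝ × ℝ × ℝ => W p f ⟨x.1, x.2.1, x.2.2.1, x.2.2.2⟩)
      (DeltaSq T) := by
  rintro ⟨a, b, c, d⟩ hx₀
  obtain ⟨ha0, hab, hbT, hc0, hcd, hdT⟩ := hx₀
  have hp0 : (0:ℝ) < p := lt_of_lt_of_le zero_lt_one hp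
  have hR₀sub : (Rect.toSet ⟨a,b,c,d⟩) ⊆ Rect.toSet ⟨0,T,0,T⟩ :=
    toSet_mono ha0 hbT hc0 hdT
  have htop₀ : W p f ⟨a,b,c,d⟩ ≠ ⊤ := ne_top_of_le_ne_top hWtop (W_mono hR₀sub)
  rw [ContinuousWithinAt]
  rw [ENNReal.tendsto_nhds htop₀]
  intro γ hγ0
  rcases eq_or_ne γ ⊤ with rfl | hγtop
  · filter_upwards with x
    constructor
    · simp
    · rw [add_top]
      exact le_top
  obtain ⟨γ', hγ'0, hγ'prop⟩ := aux_pow hp (W p f ⟨0,T,0,T⟩) γ hWtop hγ0.ne'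
  set γ'' : ℝ≥0∞ := min γ' γ with hγ''
  have hγ''0 : γ'' ≠ 0 := by
    have : (0:ℝ≥0∞) < min γ' γ := lt_min (pos_iff_ne_zero.2 hγ'0) hγ0
    rw [hγ'']
    exact this.ne'
  obtain ⟨εa, hεa0, hεa⟩ := strip_vert hp hT f hcont hWtop ⟨ha0, le_trans hab hbT⟩ hγ''0
  obtain ⟨εb, hεb0, hεb⟩ := strip_vert hp hT f hcont hWtop ⟨le_trans ha0 hab, hbT⟩ hγ''0
  obtain ⟨εc, hεc0, hεc⟩ := strip_horiz hp hT f hcont hWtop ⟨hc0, le_trans hcd hdT⟩ hγ''0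
  obtain ⟨εd, hεd0, hεd⟩ := strip_horiz hp hT f hcont hWtop ⟨le_trans hc0 hcd, hdT⟩ hγ''0
  set δ : ℝ := min (min εa εb) (min εc εd) / 3 with hδdef
  have hδ0 : 0 < δ := by
    have := lt_min (lt_min hεa0 hεb0) (lt_min hεc0 hεd0)
    positivity
  have h3δa : 3*δ ≤ εa := by
    have h1 : min (min εa εb) (min εc εd) ≤ εa := le_trans (min_le_left _ _) (min_le_left _ _)
    rw [hδdef]; linarith
  have h3δb : 3*δ ≤ εb := by
    have h1 : min (min εa εb) (min εc εd) ≤ εb := le_trans (min_le_left _ _) (min_le_right _ _)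
    rw [hδdef]; linarith
  have h3δc : 3*δ ≤ εc := by
    have h1 : min (min εa εb) (min εc εd) ≤ εc := le_trans (min_le_right _ _) (min_le_left _ _)
    rw [hδdef]; linarith
  have h3δd : 3*δ ≤ εd := by
    have h1 : min (min εa εb) (min εc εd) ≤ εd := le_trans (min_le_right _ _) (min_le_right _ _)
    rw [hδdef]; linarith
  have hSa : W p f ⟨(a-3*δ) ⊔ 0, (a+3*δ) ⊓ T, 0, T⟩ ≤ γ'' := by
    refine le_trans (W_mono (R' := ⟨(a-εa) ⊔ 0, (a+εa) ⊓ T, 0, T⟩)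
      (toSet_mono (sup_le_sup_right (by linarith) 0) (inf_le_inf (by linarith) le_rfl)
        le_rfl le_rfl)) hεa
  have hSb : W p f ⟨(b-3*δ) ⊔ 0, (b+3*δ) ⊓ T, 0, T⟩ ≤ γ'' := by
    refine le_trans (W_mono (R' := ⟨(b-εb) ⊔ 0, (b+εb) ⊓ T, 0, T⟩)
      (toSet_mono (sup_le_sup_right (by linarith) 0) (inf_le_inf (by linarith) le_rfl)
        le_rfl le_rfl)) hεb
  have hSc : W p f ⟨0, T, (c-3*δ) ⊔ 0, (c+3*δ) ⊓ T⟩ ≤ γ'' := by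
    refine le_trans (W_mono (R' := ⟨0, T, (c-εc) ⊔ 0, (c+εc) ⊓ T⟩)
      (toSet_mono le_rfl le_rfl (sup_le_sup_right (by linarith) 0)
        (inf_le_inf (by linarith) le_rfl))) hεc
  have hSd : W p f ⟨0, T, (d-3*δ) ⊔ 0, (d+3*δ) ⊓ T⟩ ≤ γ'' := by
    refine le_trans (W_mono (R' := ⟨0, T, (d-εd) ⊔ 0, (d+εd) ⊓ T⟩)
      (toSet_mono le_rfl le_rfl (sup_le_sup_right (by linarith) 0)
        (inf_le_inf (by linarith) le_rfl))) hεd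
  have hball : ∀ᶠ x in 𝓝[DeltaSq T] ((a,b,c,d) : ℝ×ℝ×ℝ×ℝ),
      dist x ((a,b,c,d) : ℝ×ℝ×ℝ×ℝ) < δ :=
    Filter.eventually_iff_exists_mem.2 ⟨Metric.ball ((a,b,c,d) : ℝ×ℝ×ℝ×ℝ) δ,
      nhdsWithin_le_nhds (Metric.ball_mem_nhds _ hδ0), fun x hx => Metric.mem_ball.1 hx⟩
  have hmemD : ∀ᶠ x in 𝓝[DeltaSq T] ((a,b,c,d) : ℝ×ℝ×ℝ×ℝ), x ∈ DeltaSq T :=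
    eventually_mem_nhdsWithin
  filter_upwards [hball, hmemD]
  rintro ⟨a', b', c', d'⟩ hxd hxD
  obtain ⟨ha0', hab', hbT', hc0', hcd', hdT'⟩ := hxD
  have hda : |a' - a| < δ := by
    have h1 : dist a' a ≤ dist ((a',b',c',d') : ℝ×ℝ×ℝ×ℝ) ((a,b,c,d) : ℝ×ℝ×ℝ×ℝ) := by
      rw [Prod.dist_eq]
      exact le_max_left _ _
    rw [Real.dist_eq] at h1
    linarith
  have hrest : dist ((b',c',d') : ℝ×ℝ×ℝ) ((b,c,d) : ℝ×ℝ×ℝ) ≤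
      dist ((a',b',c',d') : ℝ×ℝ×ℝ×ℝ) ((a,b,c,d) : ℝ×ℝ×ℝ×ℝ) := by
    rw [Prod.dist_eq]
    exact le_max_right _ _
  have hdb : |b' - b| < δ := by
    have h1 : dist b' b ≤ dist ((b',c',d') : ℝ×ℝ×ℝ) ((b,c,d) : ℝ×ℝ×ℝ) := by
      rw [Prod.dist_eq]
      exact le_max_left _ _
    rw [Real.dist_eq] at h1
    linarith [le_trans h1 hrest]
  have hrest2 : dist ((c',d') : ℝ×ℝ) ((c,d) : ℝ×ℝ) ≤
      dist ((a',b',c',d') : ℝ×ℝ×ℝ×ℝ) ((a,b,c,d) : ℝ×ℝ×ℝ×ℝ) := by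
    refine le_trans ?_ hrest
    rw [Prod.dist_eq]
    exact le_max_right _ _
  have hdc : |c' - c| < δ := by
    have h1 : dist c' c ≤ dist ((c',d') : ℝ×ℝ) ((c,d) : ℝ×ℝ) := by
      rw [Prod.dist_eq]
      exact le_max_left _ _
    rw [Real.dist_eq] at h1
    linarith [le_trans h1 hrest2]
  have hdd : |d' - d| < δ := by
    have h1 : dist d' d ≤ dist ((c',d') : ℝ×ℝ) ((c,d) : ℝ×ℝ) := by
      rw [Prod.dist_eq]
      exact le_max_right _ _
    rw [Real.dist_eq] at h1
    linarith [le_trans h1 hrest2]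
  rw [abs_sub_lt_iff] at hda hdb hdc hdd
  simp only
  by_cases hthin : b - a ≤ 2*δ ∨ d - c ≤ 2*δ
  · -- thin case : both rectangles sit inside one small strip
    have hbound : W p f ⟨a',b',c',d'⟩ ≤ γ'' ∧ W p f ⟨a,b,c,d⟩ ≤ γ'' := by
      rcases hthin with hthin | hthin
      · constructor
        · refine le_trans (W_mono (R' := ⟨(a-3*δ) ⊔ 0, (a+3*δ) ⊓ T, 0, T⟩)
            (toSet_mono (sup_le (by linarith) ha0') (le_inf (by linarith) hbT')
              hc0' hdT')) hSa
        · refine le_trans (W_mono (R' := ⟨(a-3*δ) ⊔ 0, (a+3*δ) ⊓ T, 0, T⟩)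
            (toSet_mono (sup_le (by linarith) ha0) (le_inf (by linarith) hbT)
              hc0 hdT)) hSa
      · constructor
        · refine le_trans (W_mono (R' := ⟨0, T, (c-3*δ) ⊔ 0, (c+3*δ) ⊓ T⟩)
            (toSet_mono ha0' hbT' (sup_le (by linarith) hc0') (le_inf (by linarith) hdT'))) hSc
        · refine le_trans (W_mono (R' := ⟨0, T, (c-3*δ) ⊔ 0, (c+3*δ) ⊓ T⟩)
            (toSet_mono ha0 hbT (sup_le (by linarith) hc0) (le_inf (by linarith) hdT))) hSc
    constructor
    · rw [tsub_eq_zero_of_le (le_trans hbound.2 (min_le_right γ' γ))]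
      exact zero_le
    · exact le_trans (le_trans hbound.1 (min_le_right γ' γ)) le_add_self
  · push_neg at hthin
    obtain ⟨hfat1, hfat2⟩ := hthin
    set I : Rect := ⟨a ⊔ a', b ⊓ b', c ⊔ c', d ⊓ d'⟩ with hI
    set K : Rect := ⟨a ⊓ a', b ⊔ b', c ⊓ c', d ⊔ d'⟩ with hK
    have hIab : a ⊔ a' ≤ b ⊓ b' :=
      sup_le (le_inf (by linarith) (by linarith)) (le_inf (by linarith) (by linarith))
    have hIcd : c ⊔ c' ≤ d ⊓ d' :=
      sup_le (le_inf (by linarith) (by linarith)) (le_inf (by linarith) (by linarith))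
    have hWI₀ : W p f I ≤ W p f ⟨a,b,c,d⟩ :=
      W_mono (toSet_mono le_sup_left inf_le_left le_sup_left inf_le_left)
    have hWI' : W p f I ≤ W p f ⟨a',b',c',d'⟩ :=
      W_mono (toSet_mono le_sup_right inf_le_right le_sup_right inf_le_right)
    have hW₀K : W p f ⟨a,b,c,d⟩ ≤ W p f K :=
      W_mono (toSet_mono inf_le_left le_sup_left inf_le_left le_sup_left)
    have hW'K : W p f ⟨a',b',c',d'⟩ ≤ W p f K :=
      W_mono (toSet_mono inf_le_right le_sup_right inf_le_right le_sup_right)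
    -- four successive splits of K
    have hs1 := W_split_x' (R := K) (t := a ⊔ a') hp f
      (le_trans inf_le_left le_sup_left)
      (sup_le (le_sup_of_le_left hab) (le_sup_of_le_right hab'))
    have hs2 := W_split_x' (R := (⟨a ⊔ a', b ⊔ b', c ⊓ c', d ⊔ d'⟩ : Rect)) (t := b ⊓ b') hp f
      hIab (le_trans inf_le_left le_sup_left)
    have hs3 := W_split_y' (R := (⟨a ⊔ a', b ⊓ b', c ⊓ c', d ⊔ d'⟩ : Rect)) (t := c ⊔ c') hp f
      (le_trans inf_le_left le_sup_left)
      (sup_le (le_sup_of_le_left hcd) (le_sup_of_le_right hcd'))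
    have hs4 := W_split_y' (R := (⟨a ⊔ a', b ⊓ b', c ⊔ c', d ⊔ d'⟩ : Rect)) (t := d ⊓ d') hp f
      hIcd (le_trans inf_le_left le_sup_left)
    -- strips are inside the line strips
    have hT1 : W p f ⟨a ⊓ a', a ⊔ a', c ⊓ c', d ⊔ d'⟩ ≤ γ'' := by
      refine le_trans (W_mono (R' := ⟨(a-3*δ) ⊔ 0, (a+3*δ) ⊓ T, 0, T⟩)
        (toSet_mono (sup_le (le_inf (by linarith) (by linarith)) (le_inf ha0 ha0'))
          (le_inf (sup_le (by linarith) (by linarith))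
            (sup_le (hab.trans hbT) (hab'.trans hbT')))
          (le_inf hc0 hc0') (sup_le hdT hdT'))) hSa
    have hT2 : W p f ⟨b ⊓ b', b ⊔ b', c ⊓ c', d ⊔ d'⟩ ≤ γ'' := by
      refine le_trans (W_mono (R' := ⟨(b-3*δ) ⊔ 0, (b+3*δ) ⊓ T, 0, T⟩)
        (toSet_mono (sup_le (le_inf (by linarith) (by linarith))
            (le_inf (ha0.trans hab) (ha0'.trans hab')))
          (le_inf (sup_le (by linarith) (by linarith)) (sup_le hbT hbT'))
          (le_inf hc0 hc0') (sup_le hdT hdT'))) hSb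
    have hT3 : W p f ⟨a ⊔ a', b ⊓ b', c ⊓ c', c ⊔ c'⟩ ≤ γ'' := by
      refine le_trans (W_mono (R' := ⟨0, T, (c-3*δ) ⊔ 0, (c+3*δ) ⊓ T⟩)
        (toSet_mono (le_sup_of_le_left ha0) (inf_le_left.trans hbT)
          (sup_le (le_inf (by linarith) (by linarith)) (le_inf hc0 hc0'))
          (le_inf (sup_le (by linarith) (by linarith))
            (sup_le (hcd.trans hdT) (hcd'.trans hdT'))))) hSc
    have hT4 : W p f ⟨a ⊔ a', b ⊓ b', d ⊓ d', d ⊔ d'⟩ ≤ γ'' := by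
      refine le_trans (W_mono (R' := ⟨0, T, (d-3*δ) ⊔ 0, (d+3*δ) ⊓ T⟩)
        (toSet_mono (le_sup_of_le_left ha0) (inf_le_left.trans hbT)
          (sup_le (le_inf (by linarith) (by linarith))
            (le_inf (hc0.trans hcd) (hc0'.trans hcd')))
          (le_inf (sup_le (by linarith) (by linarith)) (sup_le hdT hdT')))) hSd
    have hq : (0:ℝ) ≤ 1/p := by positivity
    have e1 : W p f ⟨a ⊓ a', a ⊔ a', c ⊓ c', d ⊔ d'⟩ ^ (1/p) ≤ γ' ^ (1/p) :=
      ENNReal.rpow_le_rpow (hT1.trans (min_le_left _ _)) hq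
    have e2 : W p f ⟨b ⊓ b', b ⊔ b', c ⊓ c', d ⊔ d'⟩ ^ (1/p) ≤ γ' ^ (1/p) :=
      ENNReal.rpow_le_rpow (hT2.trans (min_le_left _ _)) hq
    have e3 : W p f ⟨a ⊔ a', b ⊓ b', c ⊓ c', c ⊔ c'⟩ ^ (1/p) ≤ γ' ^ (1/p) :=
      ENNReal.rpow_le_rpow (hT3.trans (min_le_left _ _)) hq
    have e4 : W p f ⟨a ⊔ a', b ⊓ b', d ⊓ d', d ⊔ d'⟩ ^ (1/p) ≤ γ' ^ (1/p) :=
      ENNReal.rpow_le_rpow (hT4.trans (min_le_left _ _)) hq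
    have hchain : W p f K ^ (1/p) ≤ W p f I ^ (1/p) + 4 * γ' ^ (1/p) := by
      calc W p f K ^ (1/p)
          ≤ W p f ⟨a ⊓ a', a ⊔ a', c ⊓ c', d ⊔ d'⟩ ^ (1/p)
            + W p f ⟨a ⊔ a', b ⊔ b', c ⊓ c', d ⊔ d'⟩ ^ (1/p) := hs1
        _ ≤ γ' ^ (1/p) + (W p f ⟨a ⊔ a', b ⊓ b', c ⊓ c', d ⊔ d'⟩ ^ (1/p)
            + W p f ⟨b ⊓ b', b ⊔ b', c ⊓ c', d ⊔ d'⟩ ^ (1/p)) := add_le_add e1 hs2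
        _ ≤ γ' ^ (1/p) + ((W p f ⟨a ⊔ a', b ⊓ b', c ⊓ c', c ⊔ c'⟩ ^ (1/p)
            + W p f ⟨a ⊔ a', b ⊓ b', c ⊔ c', d ⊔ d'⟩ ^ (1/p)) + γ' ^ (1/p)) :=
            add_le_add le_rfl (add_le_add hs3 e2)
        _ ≤ γ' ^ (1/p) + ((γ' ^ (1/p) + (W p f I ^ (1/p)
            + W p f ⟨a ⊔ a', b ⊓ b', d ⊓ d', d ⊔ d'⟩ ^ (1/p))) + γ' ^ (1/p)) :=
            add_le_add le_rfl (add_le_add (add_le_add e3 hs4) le_rfl)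
        _ ≤ γ' ^ (1/p) + ((γ' ^ (1/p) + (W p f I ^ (1/p) + γ' ^ (1/p))) + γ' ^ (1/p)) := by
            gcongr
        _ = W p f I ^ (1/p) + 4 * γ' ^ (1/p) := by ring
    have hcanc : ∀ x : ℝ≥0∞, (x ^ (1/p)) ^ p = x := by
      intro x
      rw [← ENNReal.rpow_mul, one_div, inv_mul_cancel₀ hp0.ne', ENNReal.rpow_one]
    have hIM : W p f I ≤ W p f ⟨0,T,0,T⟩ :=
      W_mono (toSet_mono (le_sup_of_le_left ha0) (inf_le_left.trans hbT)
        (le_sup_of_le_left hc0) (inf_le_left.trans hdT))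
    have hKI : W p f K ≤ W p f I + γ := by
      calc W p f K = (W p f K ^ (1/p)) ^ p := (hcanc _).symm
        _ ≤ (W p f I ^ (1/p) + 4 * γ' ^ (1/p)) ^ p :=
            ENNReal.rpow_le_rpow hchain hp0.le
        _ ≤ W p f I + γ := hγ'prop _ hIM
    constructor
    · rw [tsub_le_iff_right]
      calc W p f ⟨a,b,c,d⟩ ≤ W p f K := hW₀K
        _ ≤ W p f I + γ := hKI
        _ ≤ W p f ⟨a',b',c',d'⟩ + γ := add_le_add hWI' le_rfl
    · calc W p f ⟨a',b',c',d'⟩ ≤ W p f K := hW'K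
        _ ≤ W p f I + γ := hKI
        _ ≤ W p f ⟨a,b,c,d⟩ + γ := add_le_add hWI₀ le_rfl

end Aux

/-- if `f : [0,T]² → ℝ` is continuous and of finite controlled
`p`-variation, then there is a 2D control `ω` with `|f(R)|^p ≤ ω R` for all
rectangles `R ⊆ [0,T]²`. -/
theorem exists_2D_control_dominating (p T : ℝ) (hp : 1 ≤ p) (hT : 0 < T)
    (f : ℝ × ℝ → ℝ) (hcont : ContinuousOn f (Rect.mk 0 T 0 T).toSet)
    (hf : cVarSum p f (Rect.mk 0 T 0 T) ≠ ⊤) :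
    ∃ ω : Rect → ℝ≥0∞, Is2DControl T ω ∧
      ∀ R : Rect, R.Valid → R.toSet ⊆ (Rect.mk 0 T 0 T).toSet →
        ENNReal.ofReal |Rect.inc f R| ^ p ≤ ω R := by
  have hWtop : W p f ⟨0,T,0,T⟩ ≠ ⊤ :=
    ne_top_of_le_ne_top hf (W_le_cVarSum hp hT f)
  refine ⟨W p f, ⟨?_, ?_, ?_, ?_⟩, ?_⟩
  · intro R hsub
    exact ne_top_of_le_ne_top hWtop (W_mono hsub)
  · exact W_continuousOn hp hT f hcont hWtop
  · intro R hv h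
    exact W_thin hp f hv h
  · intro R hv hsub P hPart
    refine sum_W_le hp f hPart.1 ?_ hPart.2.1
    intro Q hQ
    rw [← hPart.2.2]
    exact Set.subset_biUnion_of_mem hQ
  · intro R hv _
    exact single_le_W f hv
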